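/- arXiv:2001.00992 — 3 statements merged into one kernel-verified Lean document; each statement's English description precedes it below -/
import Mathlib

section
/- If G is a graph on n ≥ 3 vertices with matching number m(G) ≤ κ(G) and κ(G) ≥ 2, and additionally G contains no complete bipartite subgraph K_{p,p+1} with p ≥ 2 for any p ≤ κ(G), then G is Hamiltonian. -/
open SimpleGraph Finset

/-- The matching number of a graph: the largest size of a matching. -/
noncomputable def matchingNumber {V : Type*} [Fintype V] (G : SimpleGraph V) : ℕ :=
  sSup {n | ∃ M : G.Subgraph, M.IsMatching ∧ M.edgeSet.ncard = n}

/-- The vertex connectivity of a finite graph: the least size of a set `S` of vertices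
whose removal either disconnects the graph or leaves at most one vertex. -/
noncomputable def vertexConnectivity {V : Type*} [Fintype V] (G : SimpleGraph V) : ℕ :=
  sInf {k | ∃ S : Finset V, S.card = k ∧
    (¬ (G.induce ((↑S : Set V)ᶜ)).Connected ∨ Fintype.card V ≤ k + 1)}

/-- `b` is the successor of `a` along the closed walk `c` (with its fixed orientation). -/
def IsCycleSucc {V : Type*} {G : SimpleGraph V} {v : V} (c : G.Walk v v) (a b : V) : Prop :=
  ∃ k < c.length, c.getVert k = a ∧ c.getVert (k + 1) = b

/-- The family `F` of graphs `H` with `K_{p,q} ⊆ H ⊆ K_p ∨ (q·K_1)` for some `q ≥ p + 1 ≥ 3`: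
the vertices split into a set `P` of size `p ≥ 2` and a set `Q` of size `q ≥ p + 1` such that
all `P`–`Q` edges are present and `Q` is independent. -/
def inFamilyF {V : Type*} [Fintype V] [DecidableEq V] (G : SimpleGraph V) : Prop :=
  ∃ P Q : Finset V, P ∪ Q = Finset.univ ∧ Disjoint P Q ∧
    Q.card ≥ P.card + 1 ∧ P.card ≥ 2 ∧
    (∀ a ∈ P, ∀ b ∈ Q, G.Adj a b) ∧
    (∀ a ∈ Q, ∀ b ∈ Q, ¬ G.Adj a b)

set_option linter.unusedSectionVars false
set_option linter.unusedVariables false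

section AuxA

variable {V : Type*} [Fintype V] [DecidableEq V] (G : SimpleGraph V)

lemma vc_le_of_separator (S : Finset V) (h : ¬ (G.induce ((↑S : Set V)ᶜ)).Connected) :
    vertexConnectivity G ≤ S.card :=
  Nat.sInf_le ⟨S, rfl, Or.inl h⟩

lemma vc_le_card_sub_one [Nonempty V] : vertexConnectivity G ≤ Fintype.card V - 1 := by
  obtain ⟨x⟩ := ‹Nonempty V›
  refine Nat.sInf_le ⟨Finset.univ.erase x, ?_, Or.inr ?_⟩
  · simp [Finset.card_erase_of_mem, Finset.card_univ]
  · have : 1 ≤ Fintype.card V := Fintype.card_pos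
    omega

lemma connected_of_vc (hn : 3 ≤ Fintype.card V) (h2 : 2 ≤ vertexConnectivity G) :
    G.Connected := by
  by_contra hc
  have h0 : (0 : ℕ) ∈ {k | ∃ S : Finset V, S.card = k ∧
      (¬ (G.induce ((↑S : Set V)ᶜ)).Connected ∨ Fintype.card V ≤ k + 1)} := by
    refine ⟨∅, rfl, Or.inl ?_⟩
    intro hcon
    apply hc
    have : (↑(∅ : Finset V) : Set V)ᶜ = Set.univ := by simp
    rw [this] at hcon
    exact (G.induceUnivIso.connected_iff).mp hcon
  have : vertexConnectivity G ≤ 0 := Nat.sInf_le h0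
  omega

variable [DecidableRel G.Adj]

lemma vc_le_degree (x : V) : vertexConnectivity G ≤ G.degree x := by
  by_cases hy : ∃ y, y ≠ x ∧ y ∉ G.neighborFinset x
  · obtain ⟨y, hyx, hyn⟩ := hy
    have hsep : ¬ (G.induce ((↑(G.neighborFinset x) : Set V)ᶜ)).Connected := by
      intro hcon
      have hxmem : x ∈ ((↑(G.neighborFinset x) : Set V)ᶜ) := by
        simp [SimpleGraph.irrefl]
      have hymem : y ∈ ((↑(G.neighborFinset x) : Set V)ᶜ) := by simpa using hyn
      obtain ⟨W⟩ := hcon.preconnected ⟨x, hxmem⟩ ⟨y, hymem⟩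
      cases W with
      | nil => exact hyx rfl
      | cons h q =>
        rename_i z
        have hadj : G.Adj x z.val := h
        have : z.val ∈ ((↑(G.neighborFinset x) : Set V)ᶜ) := z.2
        simp only [Set.mem_compl_iff, Finset.coe_sort_coe, Finset.mem_coe,
          SimpleGraph.mem_neighborFinset] at this
        exact this hadj
    simpa [SimpleGraph.card_neighborFinset_eq_degree] using
      vc_le_of_separator G (G.neighborFinset x) hsep
  · push_neg at hy
    have hcard : Fintype.card V ≤ G.degree x + 1 := by
      have hsub : Finset.univ ⊆ insert x (G.neighborFinset x) := by
        intro y _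
        by_cases h : y = x
        · simp [h]
        · exact Finset.mem_insert_of_mem (hy y h)
      calc Fintype.card V = Finset.univ.card := (Finset.card_univ).symm
        _ ≤ (insert x (G.neighborFinset x)).card := Finset.card_le_card hsub
        _ ≤ (G.neighborFinset x).card + 1 := Finset.card_insert_le _ _
        _ = G.degree x + 1 := by rw [SimpleGraph.card_neighborFinset_eq_degree]
    have hne : Nonempty V := ⟨x⟩
    have h1 := vc_le_card_sub_one G
    omega

end AuxA

section AuxB
variable {V : Type*} [Fintype V] [DecidableEq V] (G : SimpleGraph V)

lemma matchingNumber_ge_of_injective (A : Finset V) (f : ↥A → V)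
    (hinj : Function.Injective f) (hadj : ∀ a : ↥A, G.Adj ↑a (f a))
    (hout : ∀ a : ↥A, f a ∉ A) :
    A.card ≤ matchingNumber G := by
  classical
  set M : G.Subgraph :=
    { verts := ↑A ∪ Set.range f
      Adj := fun x y => ∃ a : ↥A, (x = ↑a ∧ y = f a) ∨ (y = ↑a ∧ x = f a)
      adj_sub := by
        rintro x y ⟨a, ⟨rfl, rfl⟩ | ⟨rfl, rfl⟩⟩
        · exact hadj a
        · exact (hadj a).symm
      edge_vert := by
        rintro x y ⟨a, ⟨rfl, rfl⟩ | ⟨rfl, rfl⟩⟩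
        · exact Or.inl (by simp)
        · exact Or.inr ⟨a, rfl⟩
      symm := by
        constructor
        rintro x y ⟨a, h | h⟩
        · exact ⟨a, Or.inr h⟩
        · exact ⟨a, Or.inl h⟩ } with hM
  have hcoe : ∀ (a b : ↥A), (a : V) = (b : V) → a = b := fun a b h => Subtype.ext h
  have hMatch : M.IsMatching := by
    rintro v hv
    rcases hv with hv | ⟨a, rfl⟩
    · refine ⟨f ⟨v, hv⟩, ⟨⟨v, hv⟩, Or.inl ⟨rfl, rfl⟩⟩, ?_⟩
      rintro y ⟨b, ⟨hb1, rfl⟩ | ⟨rfl, hb2⟩⟩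
      · have : (⟨v, hv⟩ : ↥A) = b := Subtype.ext hb1
        rw [this]
      · exact absurd (hb2 ▸ hv) (hout b)
    · refine ⟨(a : V), ⟨a, Or.inr ⟨rfl, rfl⟩⟩, ?_⟩
      rintro y ⟨b, ⟨hb1, rfl⟩ | ⟨rfl, hb2⟩⟩
      · exact absurd (hb1 ▸ b.2) (hout a)
      · have : b = a := hinj hb2.symm
        rw [this]
  have hedge : M.edgeSet = (fun a : ↥A => s(↑a, f a)) '' Set.univ := by
    ext e
    induction e with
    | _ x y =>
      simp only [Subgraph.mem_edgeSet, Set.image_univ, Set.mem_range]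
      constructor
      · rintro ⟨a, ⟨rfl, rfl⟩ | ⟨rfl, rfl⟩⟩
        · exact ⟨a, rfl⟩
        · exact ⟨a, Sym2.eq_swap⟩
      · rintro ⟨a, ha⟩
        rw [Sym2.eq_iff] at ha
        rcases ha with ⟨h1, h2⟩ | ⟨h1, h2⟩
        · exact ⟨a, Or.inl ⟨h1.symm, h2.symm⟩⟩
        · exact ⟨a, Or.inr ⟨h1.symm, h2.symm⟩⟩
  have hinjOn : Set.InjOn (fun a : ↥A => s(↑a, f a)) Set.univ := by
    rintro a - b - hab
    simp only [Sym2.eq_iff] at hab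
    rcases hab with ⟨h1, h2⟩ | ⟨h1, h2⟩
    · exact Subtype.ext h1
    · exact absurd (h2.symm ▸ b.2 : f a ∈ A) (hout a)
  have hncard : M.edgeSet.ncard = A.card := by
    rw [hedge, Set.ncard_image_of_injOn hinjOn, Set.ncard_univ, Nat.card_eq_fintype_card,
      Fintype.card_coe]
  have hbdd : BddAbove {n | ∃ M : G.Subgraph, M.IsMatching ∧ M.edgeSet.ncard = n} := by
    refine ⟨Fintype.card (Sym2 V), ?_⟩
    rintro n ⟨N, -, rfl⟩
    calc N.edgeSet.ncard ≤ (Set.univ : Set (Sym2 V)).ncard :=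
          Set.ncard_le_ncard (Set.subset_univ _) Set.finite_univ
      _ = Fintype.card (Sym2 V) := by rw [Set.ncard_univ, Nat.card_eq_fintype_card]
  have : A.card ∈ {n | ∃ M : G.Subgraph, M.IsMatching ∧ M.edgeSet.ncard = n} :=
    ⟨M, hMatch, hncard⟩
  exact le_csSup hbdd this

lemma no_indep_set [DecidableRel G.Adj] (hn : 3 ≤ Fintype.card V)
    (hκ : 2 ≤ vertexConnectivity G)
    (hm : matchingNumber G ≤ vertexConnectivity G)
    (hforb : ∀ p : ℕ, 2 ≤ p → p ≤ vertexConnectivity G →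
      ¬ ∃ A B : Finset V, Disjoint A B ∧ A.card = p ∧ B.card = p + 1 ∧
          ∀ a ∈ A, ∀ b ∈ B, G.Adj a b)
    (A : Finset V) (hA : A.card = vertexConnectivity G + 1)
    (hind : ∀ a ∈ A, ∀ b ∈ A, ¬ G.Adj a b) : False := by
  classical
  set k := vertexConnectivity G with hk
  set t : ↥A → Finset V := fun a => G.neighborFinset ↑a with ht
  by_cases hHall : ∀ s : Finset ↥A, s.card ≤ (s.biUnion t).card
  · obtain ⟨f, hinj, hf⟩ := (Finset.all_card_le_biUnion_card_iff_existsInjective' t).mp hHall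
    have hadj : ∀ a : ↥A, G.Adj ↑a (f a) := fun a => by
      have := hf a; rwa [ht, SimpleGraph.mem_neighborFinset] at this
    have hout : ∀ a : ↥A, f a ∉ A := fun a hfa => hind _ a.2 _ hfa (hadj a)
    have := matchingNumber_ge_of_injective G A f hinj hadj hout
    omega
  · push_neg at hHall
    obtain ⟨s, hs⟩ := hHall
    set T' : Finset V := s.biUnion t with hT'
    set S : Finset V := s.image Subtype.val with hS
    have hcardS : S.card = s.card := Finset.card_image_of_injective _ Subtype.val_injective
    have hTA : ∀ y ∈ T', y ∉ A := by
      intro y hy hyA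
      obtain ⟨a, ha, hya⟩ := Finset.mem_biUnion.mp hy
      rw [ht, SimpleGraph.mem_neighborFinset] at hya
      exact hind _ a.2 _ hyA hya
    have hSA : S ⊆ A := by
      intro y hy
      obtain ⟨a, _, rfl⟩ := Finset.mem_image.mp hy
      exact a.2
    have hsne : s.Nonempty := Finset.card_pos.mp (by omega)
    obtain ⟨a₀, ha₀⟩ := hsne
    have hkT : k ≤ T'.card := by
      by_cases hrest : ∃ y, y ∉ S ∧ y ∉ T'
      · obtain ⟨y, hyS, hyT⟩ := hrest
        refine vc_le_of_separator G T' ?_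
        intro hcon
        have hxm : (↑a₀ : V) ∈ ((↑T' : Set V)ᶜ) := by
          simp only [Set.mem_compl_iff, Finset.mem_coe]
          exact fun h => hTA _ h a₀.2
        have hym : y ∈ ((↑T' : Set V)ᶜ) := by simpa using hyT
        have ha₀S : (↑a₀ : V) ∈ S := Finset.mem_image.mpr ⟨a₀, ha₀, rfl⟩
        have hne : (↑a₀ : V) ≠ y := fun h => hyS (h ▸ ha₀S)
        obtain ⟨W⟩ := hcon.preconnected ⟨↑a₀, hxm⟩ ⟨y, hym⟩
        cases W with
        | nil => exact absurd rfl hne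
        | cons h q =>
          rename_i z
          have hadj : G.Adj ↑a₀ z.val := h
          have hzT : z.val ∈ T' := Finset.subset_biUnion_of_mem t ha₀
            (by rw [ht, SimpleGraph.mem_neighborFinset]; exact hadj)
          have := z.2
          simp only [Set.mem_compl_iff, Finset.mem_coe] at this
          exact this hzT
      · push_neg at hrest
        have hAS : A ⊆ S := fun a ha => by
          by_contra hna
          exact hTA a (hrest a hna) ha
        have hSeq : S = A := hSA.antisymm hAS
        have h1 : G.neighborFinset ↑a₀ ⊆ T' := Finset.subset_biUnion_of_mem t ha₀
        have h2 : k ≤ (G.neighborFinset ↑a₀).card := by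
          rw [SimpleGraph.card_neighborFinset_eq_degree]
          exact vc_le_degree G _
        exact h2.trans (Finset.card_le_card h1)
    -- common ending
    have hsub : s.card ≤ Fintype.card ↥A := Finset.card_le_univ s
    rw [Fintype.card_coe, hA] at hsub
    have hT'k : T'.card = k := by omega
    have hscard : s.card = k + 1 := by omega
    have hsuniv : s = Finset.univ := Finset.eq_univ_of_card s (by rw [Fintype.card_coe, hA, hscard])
    have hnbr : ∀ a : ↥A, G.neighborFinset ↑a = T' := by
      intro a
      have h1 : G.neighborFinset ↑a ⊆ T' := by
        rw [hT']
        exact Finset.subset_biUnion_of_mem t (hsuniv ▸ Finset.mem_univ a)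
      have h2 : k ≤ (G.neighborFinset ↑a).card := by
        rw [SimpleGraph.card_neighborFinset_eq_degree]
        exact vc_le_degree G _
      exact Finset.eq_of_subset_of_card_le h1 (by omega)
    refine hforb k hκ le_rfl ⟨T', A, ?_, hT'k, by omega, ?_⟩
    · rw [Finset.disjoint_left]
      exact fun a ha => hTA a ha
    · intro a ha b hb
      have : a ∈ G.neighborFinset b := (hnbr ⟨b, hb⟩) ▸ ha
      rw [SimpleGraph.mem_neighborFinset] at this
      exact this.symm

end AuxB

namespace CycleAux
variable {V : Type*} {G : SimpleGraph V}

lemma firstDart_mem_darts {u v : V} (q : G.Walk u v) (hq : ¬ q.Nil) :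
    q.firstDart hq ∈ q.darts := by
  cases q with
  | nil => simp at hq
  | cons h r =>
    rename_i y
    have h1 : (SimpleGraph.Walk.cons h r).getVert 1 = y := r.getVert_zero
    have heq : (SimpleGraph.Walk.cons h r).firstDart hq = SimpleGraph.Dart.mk (u, y) h := by
      have : ((SimpleGraph.Walk.cons h r).firstDart hq).toProd = (u, y) := by
        rw [Prod.ext_iff]
        exact ⟨rfl, h1⟩
      exact SimpleGraph.Dart.ext _ _ this
    rw [heq, SimpleGraph.Walk.darts_cons]
    exact List.mem_cons_self

lemma support_eq_map_getVert {u v : V} (p : G.Walk u v) :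
    p.support = (List.range (p.length + 1)).map p.getVert := by
  induction p with
  | nil => simp [SimpleGraph.Walk.getVert]
  | cons h r ih =>
    conv_rhs => rw [SimpleGraph.Walk.length_cons, List.range_succ_eq_map,
      List.map_cons, List.map_map]
    rw [SimpleGraph.Walk.support_cons, ih]
    rfl

-- darts with equal fst in a closed walk with nodup tail support are equal
lemma dart_fst_unique {w : V} {c : G.Walk w w} (hnd : c.support.tail.Nodup)
    {d₁ d₂ : G.Dart} (h₁ : d₁ ∈ c.darts) (h₂ : d₂ ∈ c.darts)
    (hfst : d₁.fst = d₂.fst) : d₁ = d₂ := by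
  have hmap : c.darts.map (·.fst) = c.support.dropLast := c.map_fst_darts
  have htail : c.support.tail ≠ [] ∨ c.darts = [] := by
    cases c with
    | nil => right; rfl
    | cons h r => left; simp [SimpleGraph.Walk.support_cons,
        SimpleGraph.Walk.support_ne_nil]
  have hnodup : (c.darts.map (·.fst)).Nodup := by
    rw [hmap]
    have hsup : c.support = w :: c.support.tail := c.support_eq_cons
    rcases htail with ht | hd
    · have hlast : c.support.tail.getLast ht = w := by
        rw [List.getLast_tail]
        exact c.getLast_support
      have : c.support.dropLast = w :: c.support.tail.dropLast := by
        conv_lhs => rw [hsup]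
        rw [List.dropLast_cons_of_ne_nil ht]
      rw [this]
      refine List.nodup_cons.mpr ⟨?_, hnd.sublist (List.dropLast_sublist _)⟩
      intro hmem
      have hteq : c.support.tail = c.support.tail.dropLast ++ [w] := by
        conv_lhs => rw [← List.dropLast_append_getLast ht, hlast]
      rw [hteq] at hnd
      exact (List.disjoint_of_nodup_append hnd) hmem (by simp)
    · rw [← hmap, hd]
      simp
  exact List.inj_on_of_nodup_map hnodup h₁ h₂ hfst

lemma dart_snd_unique {w : V} {c : G.Walk w w} (hnd : c.support.tail.Nodup)
    {d₁ d₂ : G.Dart} (h₁ : d₁ ∈ c.darts) (h₂ : d₂ ∈ c.darts)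
    (hsnd : d₁.snd = d₂.snd) : d₁ = d₂ := by
  have hmap : c.darts.map (·.snd) = c.support.tail := c.map_snd_darts
  have hnodup : (c.darts.map (·.snd)).Nodup := by rw [hmap]; exact hnd
  exact List.inj_on_of_nodup_map hnodup h₁ h₂ hsnd

lemma getVert_injOn_of_support_nodup {u v : V} {p : G.Walk u v}
    (h : p.support.Nodup) {i j : ℕ} (hi : i ≤ p.length) (hj : j ≤ p.length)
    (hij : p.getVert i = p.getVert j) : i = j := by
  have hmap := support_eq_map_getVert p
  rw [hmap] at h
  exact List.inj_on_of_nodup_map h (List.mem_range.mpr (by omega))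
    (List.mem_range.mpr (by omega)) hij

/-- A closed walk of length ≥ 3 whose tail support has no duplicates is a cycle. -/
lemma isCycle_of_tail_nodup {u : V} {c : G.Walk u u} (h3 : 3 ≤ c.length)
    (hnd : c.support.tail.Nodup) : c.IsCycle := by
  cases c with
  | nil => simp at h3
  | cons h p =>
    rename_i x
    have hp : p.support.Nodup := by simpa using hnd
    have hpath : p.IsPath := SimpleGraph.Walk.IsPath.mk' hp
    rw [SimpleGraph.Walk.cons_isCycle_iff]
    refine ⟨hpath, ?_⟩
    intro he
    obtain ⟨d, hd, hde⟩ := List.mem_map.mp he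
    have hplen : 2 ≤ p.length := by
      have := (SimpleGraph.Walk.length_cons h p)
      omega
    rw [SimpleGraph.Dart.edge] at hde
    rw [Sym2.eq_iff] at hde
    have hu_not_dropLast : u ∉ p.support.dropLast := by
      have hne : p.support ≠ [] := SimpleGraph.Walk.support_ne_nil _
      have heq : p.support = p.support.dropLast ++ [u] := by
        conv_lhs => rw [← List.dropLast_append_getLast hne, p.getLast_support]
      rw [heq] at hp
      intro hmem
      exact (List.disjoint_of_nodup_append hp) hmem (by simp)
    rcases hde with ⟨hdf, hds⟩ | ⟨hdf, hds⟩
    · -- d.fst = u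
      apply hu_not_dropLast
      rw [← p.map_fst_darts]
      exact List.mem_map.mpr ⟨d, hd, hdf⟩
    · -- d.fst = x, d.snd = u : d is the last dart, so x = penultimate
      have hnn : ¬ p.reverse.Nil := by
        rw [SimpleGraph.Walk.nil_iff_length_eq]
        rw [SimpleGraph.Walk.length_reverse]
        omega
      have hdsym : d.symm ∈ p.reverse.darts := by
        rw [SimpleGraph.Walk.darts_reverse]
        rw [List.mem_reverse]
        exact List.mem_map_of_mem hd
      have hfd := firstDart_mem_darts p.reverse hnn
      have hrev_nd : p.reverse.support.dropLast.Nodup := by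
        rw [SimpleGraph.Walk.support_reverse]
        exact ((List.nodup_reverse.mpr hp)).sublist (List.dropLast_sublist _)
      -- uniqueness of darts with fst = u in the path p.reverse
      have hmap : p.reverse.darts.map (·.fst) = p.reverse.support.dropLast :=
        p.reverse.map_fst_darts
      have hnodup : (p.reverse.darts.map (·.fst)).Nodup := by rw [hmap]; exact hrev_nd
      have heqd : d.symm = p.reverse.firstDart hnn := by
        refine List.inj_on_of_nodup_map hnodup hdsym hfd ?_
        show d.symm.fst = u
        simp [SimpleGraph.Dart.symm, hds]
      have hx : x = p.reverse.getVert 1 := by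
        have : d.symm.snd = (p.reverse.firstDart hnn).snd := by rw [heqd]
        simpa [SimpleGraph.Dart.symm, hdf] using this
      have hx2 : x = p.getVert (p.length - 1) :=
        hx.trans (SimpleGraph.Walk.getVert_reverse p 1)
      have hx0 : p.getVert 0 = x := p.getVert_zero
      have := getVert_injOn_of_support_nodup hp (by omega : (0:ℕ) ≤ p.length)
        (by omega : p.length - 1 ≤ p.length) (by rw [hx0]; exact hx2)
      omega



-- re-declare (they compile in part3; here assume via import? no—single file later). For now axiom-free: copy minimal:
lemma firstDart_mem_darts' {u v : V} (q : G.Walk u v) (hq : ¬ q.Nil) :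
    q.firstDart hq ∈ q.darts := by
  cases q with
  | nil => simp at hq
  | cons h r =>
    rename_i y
    have h1 : (SimpleGraph.Walk.cons h r).getVert 1 = y := r.getVert_zero
    have heq : (SimpleGraph.Walk.cons h r).firstDart hq = SimpleGraph.Dart.mk (u, y) h := by
      have : ((SimpleGraph.Walk.cons h r).firstDart hq).toProd = (u, y) := by
        rw [Prod.ext_iff]
        exact ⟨rfl, h1⟩
      exact SimpleGraph.Dart.ext _ _ this
    rw [heq, SimpleGraph.Walk.darts_cons]
    exact List.mem_cons_self

section Rotate
variable [DecidableEq V]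

lemma length_rotate {w u : V} (c : G.Walk w w) (h : u ∈ c.support) :
    (c.rotate _ h).length = c.length := by
  have h1 := congrArg SimpleGraph.Walk.length (c.take_spec h)
  rw [SimpleGraph.Walk.length_append] at h1
  rw [SimpleGraph.Walk.rotate, SimpleGraph.Walk.length_append]
  omega

lemma rotate_not_nil {w u : V} (c : G.Walk w w) (h : u ∈ c.support) (hnil : ¬c.Nil) :
    ¬(c.rotate _ h).Nil := by
  rw [SimpleGraph.Walk.nil_iff_length_eq] at hnil ⊢
  rw [length_rotate]
  exact hnil

lemma mem_support_iff_mem_tail {w : V} (c : G.Walk w w) (hnil : ¬c.Nil) (y : V) :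
    y ∈ c.support ↔ y ∈ c.support.tail := by
  constructor
  · intro h
    have htne : c.support.tail ≠ [] := by
      have : c.support.tail.length = c.length := by
        have := c.length_support
        rw [c.support_eq_cons] at this
        simpa using this.symm ▸ rfl
      intro hh
      rw [SimpleGraph.Walk.nil_iff_length_eq] at hnil
      apply hnil
      have := c.length_support
      rw [c.support_eq_cons, hh] at this
      simpa using this
    rw [c.support_eq_cons] at h
    rcases List.mem_cons.mp h with rfl | h
    · have : c.support.tail.getLast htne = y := by
        rw [List.getLast_tail]
        exact c.getLast_support
      have hm := List.getLast_mem htne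
      rwa [this] at hm
    · exact h
  · intro h
    rw [c.support_eq_cons]
    exact List.mem_cons_of_mem _ h

lemma mem_rotate_support {w u : V} (c : G.Walk w w) (h : u ∈ c.support) (hnil : ¬c.Nil)
    {y : V} : y ∈ (c.rotate _ h).support ↔ y ∈ c.support := by
  rw [mem_support_iff_mem_tail _ (rotate_not_nil c h hnil), mem_support_iff_mem_tail _ hnil]
  exact (c.support_rotate _ h).mem_iff

lemma exists_dart {w t : V} (c : G.Walk w w) (hnil : ¬c.Nil) (ht : t ∈ c.support) :
    ∃ d ∈ c.darts, d.fst = t ∧ d.snd = (c.rotate _ ht).getVert 1 := by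
  have hnn := rotate_not_nil c ht hnil
  refine ⟨(c.rotate _ ht).firstDart hnn, ?_, rfl, rfl⟩
  exact ((c.rotate_darts _ ht).mem_iff).mp (firstDart_mem_darts' _ hnn)

lemma dart_snd_eq {w t : V} (c : G.Walk w w) (hnil : ¬c.Nil)
    (hnd : c.support.tail.Nodup) (ht : t ∈ c.support)
    {d : G.Dart} (hd : d ∈ c.darts) (hfst : d.fst = t) :
    d.snd = (c.rotate _ ht).getVert 1 := by
  obtain ⟨d', hd', hf', hs'⟩ := exists_dart c hnil ht
  rw [← hs']
  have : d = d' := dart_fst_unique hnd hd hd' (hfst.trans hf'.symm)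
  rw [this]

lemma adj_succ {w t : V} (c : G.Walk w w) (hnil : ¬c.Nil) (ht : t ∈ c.support) :
    G.Adj t ((c.rotate _ ht).getVert 1) := by
  obtain ⟨d, hd, hf, hs⟩ := exists_dart c hnil ht
  have := d.adj
  rw [hf, hs] at this
  exact this

lemma succ_mem_support {w t : V} (c : G.Walk w w) (hnil : ¬c.Nil) (ht : t ∈ c.support) :
    (c.rotate _ ht).getVert 1 ∈ c.support := by
  obtain ⟨d, hd, _, hs⟩ := exists_dart c hnil ht
  rw [← hs]
  exact c.dart_snd_mem_support_of_mem_darts hd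

lemma succ_inj {w t₁ t₂ : V} (c : G.Walk w w) (hnil : ¬c.Nil)
    (hnd : c.support.tail.Nodup) (ht₁ : t₁ ∈ c.support) (ht₂ : t₂ ∈ c.support)
    (h : (c.rotate _ ht₁).getVert 1 = (c.rotate _ ht₂).getVert 1) : t₁ = t₂ := by
  obtain ⟨d₁, hd₁, hf₁, hs₁⟩ := exists_dart c hnil ht₁
  obtain ⟨d₂, hd₂, hf₂, hs₂⟩ := exists_dart c hnil ht₂
  have : d₁ = d₂ := dart_snd_unique hnd hd₁ hd₂ (by rw [hs₁, hs₂, h])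
  rw [← hf₁, ← hf₂, this]

end Rotate

section Surgery
variable [DecidableEq V]

lemma surgery1 {w t : V} (c : G.Walk w w) (h3 : 3 ≤ c.length)
    (hnd : c.support.tail.Nodup) (ht : t ∈ c.support)
    {h₀ h₁ : V} (r : G.Walk h₀ h₁) (hr : r.support.Nodup)
    (hdisj : ∀ y ∈ r.support, y ∉ c.support)
    (hth₀ : G.Adj t h₀) (hh₁x : G.Adj h₁ ((c.rotate _ ht).getVert 1)) :
    ∃ (u : V) (c' : G.Walk u u), ¬c'.Nil ∧ c'.support.tail.Nodup ∧ c.length < c'.length := by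
  have hnil : ¬c.Nil := by rw [SimpleGraph.Walk.nil_iff_length_eq]; omega
  have hnn₁ : ¬(c.rotate _ ht).Nil := rotate_not_nil c ht hnil
  set c₁ := c.rotate _ ht with hc₁
  set P := c₁.tail with hP
  have hPlen : P.length + 1 = c.length := by
    rw [hP, SimpleGraph.Walk.length_tail_add_one hnn₁, hc₁, length_rotate]
  have hPsupp_tail : P.support = c₁.support.tail := SimpleGraph.Walk.support_tail_of_not_nil c₁ hnn₁
  have hPnodup : P.support.Nodup := by
    rw [hPsupp_tail]
    exact ((c.support_rotate _ ht).nodup_iff).mpr hnd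
  have hPc : ∀ y ∈ P.support, y ∈ c.support := by
    intro y hy
    rw [hPsupp_tail] at hy
    exact (mem_rotate_support c ht hnil).mp (List.tail_subset _ hy)
  set q : G.Walk t (c₁.getVert 1) :=
    SimpleGraph.Walk.cons hth₀ (r.append (SimpleGraph.Walk.cons hh₁x SimpleGraph.Walk.nil)) with hq
  have hqlen : q.length = r.length + 2 := by
    rw [hq, SimpleGraph.Walk.length_cons, SimpleGraph.Walk.length_append,
      SimpleGraph.Walk.length_cons, SimpleGraph.Walk.length_nil]
  have hq_supp : q.support = t :: (r.support ++ [c₁.getVert 1]) := by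
    rw [hq, SimpleGraph.Walk.support_cons, SimpleGraph.Walk.support_append,
      SimpleGraph.Walk.support_cons, SimpleGraph.Walk.support_nil]
    simp
  refine ⟨t, q.append P, ?_, ?_, ?_⟩
  · rw [SimpleGraph.Walk.nil_iff_length_eq, SimpleGraph.Walk.length_append]
    omega
  · have hsupp : (q.append P).support = q.support ++ P.support.tail :=
      SimpleGraph.Walk.support_append q P
    rw [hsupp, hq_supp, List.cons_append, List.tail_cons, List.append_assoc,
      List.singleton_append, ← P.support_eq_cons]
    rw [List.nodup_append]
    refine ⟨hr, hPnodup, ?_⟩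
    intro y hy z hy' hyz; rw [← hyz] at hy'
    exact hdisj y hy (hPc y hy')
  · rw [SimpleGraph.Walk.length_append]
    omega

lemma surgery2 {w t₁ t₂ : V} (c : G.Walk w w) (h3 : 3 ≤ c.length)
    (hnd : c.support.tail.Nodup) (ht₁ : t₁ ∈ c.support) (ht₂ : t₂ ∈ c.support)
    (hne : t₁ ≠ t₂)
    {h₀ h₁ : V} (r : G.Walk h₀ h₁) (hr : r.support.Nodup)
    (hdisj : ∀ y ∈ r.support, y ∉ c.support)
    (ht₁h₀ : G.Adj t₁ h₀) (hh₁t₂ : G.Adj h₁ t₂)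
    (hadj : G.Adj ((c.rotate _ ht₁).getVert 1) ((c.rotate _ ht₂).getVert 1)) :
    ∃ (u : V) (c' : G.Walk u u), ¬c'.Nil ∧ c'.support.tail.Nodup ∧ c.length < c'.length := by
  have hnil : ¬c.Nil := by rw [SimpleGraph.Walk.nil_iff_length_eq]; omega
  have hnn₁ : ¬(c.rotate _ ht₁).Nil := rotate_not_nil c ht₁ hnil
  set c₁ := c.rotate _ ht₁ with hc₁
  set P := c₁.tail with hP
  have hPlen : P.length + 1 = c.length := by
    rw [hP, SimpleGraph.Walk.length_tail_add_one hnn₁, hc₁, length_rotate]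
  have hPsupp_tail : P.support = c₁.support.tail := SimpleGraph.Walk.support_tail_of_not_nil c₁ hnn₁
  have hPnodup : P.support.Nodup := by
    rw [hPsupp_tail]
    exact ((c.support_rotate _ ht₁).nodup_iff).mpr hnd
  have hPc : ∀ y ∈ P.support, y ∈ c.support := by
    intro y hy
    rw [hPsupp_tail] at hy
    exact (mem_rotate_support c ht₁ hnil).mp (List.tail_subset _ hy)
  have ht₂P : t₂ ∈ P.support := by
    rw [hPsupp_tail, (c.support_rotate _ ht₁).mem_iff]
    exact (mem_support_iff_mem_tail c hnil t₂).mp ht₂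
  set M := P.takeUntil t₂ ht₂P with hM
  set E0 := P.dropUntil t₂ ht₂P with hE0
  have hMElen : M.length + E0.length = P.length := by
    have h' := congrArg SimpleGraph.Walk.length (P.take_spec ht₂P)
    rw [SimpleGraph.Walk.length_append] at h'
    rw [← hM, ← hE0] at h'
    omega
  have hE0nn : ¬E0.Nil := SimpleGraph.Walk.not_nil_of_ne (Ne.symm hne)
  set E := E0.tail with hE
  have hElen : E.length + 1 = E0.length := SimpleGraph.Walk.length_tail_add_one hE0nn
  have hE0supp : E0.support = t₂ :: E.support := by
    rw [hE]
    exact (SimpleGraph.Walk.cons_support_tail (p := E0) hE0nn).symm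
  -- identify E0.getVert 1 with the successor of t₂ in c
  have hx₂ : E0.getVert 1 = (c.rotate _ ht₂).getVert 1 := by
    have hd1 : E0.firstDart hE0nn ∈ E0.darts := firstDart_mem_darts' _ hE0nn
    have hd2 : E0.firstDart hE0nn ∈ P.darts := P.darts_dropUntil_subset ht₂P hd1
    have hd3 : E0.firstDart hE0nn ∈ c₁.darts := by
      have hcons := SimpleGraph.Walk.cons_tail_eq c₁ hnn₁
      have : P.darts ⊆ c₁.darts := by
        intro d hd
        rw [← hcons, SimpleGraph.Walk.darts_cons]
        exact List.mem_cons_of_mem _ hd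
      exact this hd2
    have hd4 : E0.firstDart hE0nn ∈ c.darts := ((c.rotate_darts _ ht₁).mem_iff).mp hd3
    exact dart_snd_eq c hnil hnd ht₂ hd4 rfl
  have hadj' : G.Adj (c₁.getVert 1) (E0.getVert 1) := by
    rw [hx₂]
    exact hadj
  set q : G.Walk t₁ t₂ :=
    SimpleGraph.Walk.cons ht₁h₀ (r.append (SimpleGraph.Walk.cons hh₁t₂ SimpleGraph.Walk.nil)) with hq
  have hqlen : q.length = r.length + 2 := by
    rw [hq, SimpleGraph.Walk.length_cons, SimpleGraph.Walk.length_append,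
      SimpleGraph.Walk.length_cons, SimpleGraph.Walk.length_nil]
  have hq_supp : q.support = t₁ :: (r.support ++ [t₂]) := by
    rw [hq, SimpleGraph.Walk.support_cons, SimpleGraph.Walk.support_append,
      SimpleGraph.Walk.support_cons, SimpleGraph.Walk.support_nil]
    simp
  set inner : G.Walk t₂ t₁ := M.reverse.append (SimpleGraph.Walk.cons hadj' E) with hinner
  refine ⟨t₁, q.append inner, ?_, ?_, ?_⟩
  · rw [SimpleGraph.Walk.nil_iff_length_eq, SimpleGraph.Walk.length_append]
    omega
  · -- nodup of support tail
    have hPsplit : P.support = M.support ++ E.support := by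
      conv_lhs => rw [← P.take_spec ht₂P]
      rw [SimpleGraph.Walk.support_append, hE0supp]
      simp [hM]
    have hMnodup : M.support.Nodup := by
      rw [hPsplit] at hPnodup
      exact (List.nodup_append.mp hPnodup).1
    have hEnodup : E.support.Nodup := by
      rw [hPsplit] at hPnodup
      exact (List.nodup_append.mp hPnodup).2.1
    have hMEdisj : List.Disjoint M.support E.support := by
      rw [hPsplit] at hPnodup
      exact List.disjoint_of_nodup_append hPnodup
    have ht₂M : t₂ ∈ M.support := SimpleGraph.Walk.end_mem_support M
    have ht₂E : t₂ ∉ E.support := fun h => hMEdisj ht₂M h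
    have hMrev_ne : M.support.reverse ≠ [] := by
      simp [SimpleGraph.Walk.support_ne_nil]
    have hMrev_head : M.support.reverse = t₂ :: M.support.reverse.tail := by
      rw [← List.cons_head_tail hMrev_ne]
      congr 1
      rw [List.head_reverse]
      exact M.getLast_support
    have ht₂Mtail : t₂ ∉ M.support.reverse.tail := by
      intro hmem
      have : M.support.reverse.Nodup := List.nodup_reverse.mpr hMnodup
      rw [hMrev_head] at this
      exact (List.nodup_cons.mp this).1 hmem
    have hMtail_sub : ∀ y ∈ M.support.reverse.tail, y ∈ M.support := by
      intro y hy
      have := List.tail_subset _ hy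
      rwa [List.mem_reverse] at this
    -- support of the new walk
    have hinner_supp : inner.support = M.support.reverse ++ E.support := by
      rw [hinner, SimpleGraph.Walk.support_append, SimpleGraph.Walk.support_reverse,
        SimpleGraph.Walk.support_cons]
      simp
    have hsupp : (q.append inner).support.tail
        = (r.support ++ [t₂]) ++ (M.support.reverse.tail ++ E.support) := by
      rw [SimpleGraph.Walk.support_append, hq_supp, List.cons_append, List.tail_cons,
        hinner_supp]
      rw [hMrev_head]
      simp
    rw [hsupp]
    have hMsub : ∀ y ∈ M.support, y ∈ c.support :=
      fun y hy => hPc y (hPsplit ▸ List.mem_append_left _ hy)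
    have hEsub : ∀ y ∈ E.support, y ∈ c.support :=
      fun y hy => hPc y (hPsplit ▸ List.mem_append_right _ hy)
    rw [List.nodup_append]
    refine ⟨?_, ?_, ?_⟩
    · rw [List.nodup_append]
      refine ⟨hr, List.nodup_singleton _, ?_⟩
      intro y hy z hy' hyz; rw [← hyz] at hy'
      rw [List.mem_singleton] at hy'
      exact hdisj y hy (hy' ▸ hPc t₂ ht₂P)
    · rw [List.nodup_append]
      refine ⟨(List.nodup_reverse.mpr hMnodup).sublist (List.tail_sublist _), hEnodup, ?_⟩
      intro y hy z hy' hyz; rw [← hyz] at hy'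
      exact hMEdisj (hMtail_sub y hy) hy'
    · intro y hy z hy' hyz; rw [← hyz] at hy'
      rcases List.mem_append.mp hy with hyr | hyt
      · rcases List.mem_append.mp hy' with h1 | h2
        · exact hdisj y hyr (hMsub y (hMtail_sub y h1))
        · exact hdisj y hyr (hEsub y h2)
      · rw [List.mem_singleton] at hyt
        subst hyt
        rcases List.mem_append.mp hy' with h1 | h2
        · exact ht₂Mtail h1
        · exact ht₂E h2
  · have hinlen : inner.length = M.length + E.length + 1 := by
      rw [hinner]
      simp only [SimpleGraph.Walk.length_append, SimpleGraph.Walk.length_cons,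
        SimpleGraph.Walk.length_reverse]
      omega
    rw [SimpleGraph.Walk.length_append, hqlen, hinlen]
    omega

end Surgery

section Exist
variable [Fintype V] [DecidableEq V] [DecidableRel G.Adj]

lemma exists_cycle_of_min_degree (hconn : G.Connected) (hdeg : ∀ x : V, 2 ≤ G.degree x) :
    ∃ (u : V) (c : G.Walk u u), c.IsCycle := by
  by_contra h
  push_neg at h
  have hac : G.IsAcyclic := fun v c hc => h v c hc
  have htree : G.IsTree := ⟨hconn, hac⟩
  have hcard := htree.card_edgeFinset
  have hsum := G.sum_degrees_eq_twice_card_edges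
  have hge : Fintype.card V * 2 ≤ ∑ v : V, G.degree v := by
    calc Fintype.card V * 2 = ∑ _v : V, 2 := by
          rw [Finset.sum_const, Finset.card_univ, smul_eq_mul]
      _ ≤ ∑ v : V, G.degree v := Finset.sum_le_sum (fun i _ => hdeg i)
  omega

lemma isHamiltonian_of_cover {w : V} (c : G.Walk w w) (h3 : 3 ≤ c.length)
    (hnd : c.support.tail.Nodup) (hcov : ∀ y : V, y ∈ c.support) :
    c.IsHamiltonianCycle := by
  have hcyc := isCycle_of_tail_nodup h3 hnd
  refine ⟨hcyc, ?_⟩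
  intro a
  rw [SimpleGraph.Walk.support_tail_of_not_nil c hcyc.not_nil]
  exact List.count_eq_one_of_mem hnd
    ((mem_support_iff_mem_tail c hcyc.not_nil a).mp (hcov a))

end Exist

end CycleAux

open CycleAux in
/-- If `G` has `n ≥ 3` vertices, `m(G) ≤ κ(G)`, `κ(G) ≥ 2`, and `G` contains no complete
bipartite subgraph `K_{p,p+1}` for any `2 ≤ p ≤ κ(G)`, then `G` is Hamiltonian. -/
theorem stmt_11 {V : Type*} [Fintype V] [DecidableEq V] (G : SimpleGraph V)
    (hn : 3 ≤ Fintype.card V)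
    (hκ : 2 ≤ vertexConnectivity G)
    (hm : matchingNumber G ≤ vertexConnectivity G)
    (hforb : ∀ p : ℕ, 2 ≤ p → p ≤ vertexConnectivity G →
      ¬ ∃ A B : Finset V, Disjoint A B ∧ A.card = p ∧ B.card = p + 1 ∧
          ∀ a ∈ A, ∀ b ∈ B, G.Adj a b) :
    G.IsHamiltonian := by
  classical
  by_contra hG
  -- the collection of lengths of closed walks with no repeated vertex (other than the base)
  set 𝒮 : Set ℕ :=
    {l | ∃ (u : V) (c : G.Walk u u), ¬c.Nil ∧ c.support.tail.Nodup ∧ c.length = l} with h𝒮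
  have hconn : G.Connected := connected_of_vc G hn hκ
  have hdeg : ∀ x : V, vertexConnectivity G ≤ G.degree x := fun x => vc_le_degree G x
  obtain ⟨u₀, c₀, hc₀⟩ := exists_cycle_of_min_degree hconn (fun x => le_trans hκ (hdeg x))
  have h𝒮ne : 𝒮.Nonempty := ⟨c₀.length, u₀, c₀, hc₀.not_nil, hc₀.support_nodup, rfl⟩
  have h𝒮bdd : BddAbove 𝒮 := by
    refine ⟨Fintype.card V, ?_⟩
    rintro l ⟨u, c, hn', hnd, rfl⟩
    have h1 : c.support.tail.length = c.length := by
      rw [List.length_tail, SimpleGraph.Walk.length_support]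
      omega
    calc c.length = c.support.tail.length := h1.symm
      _ ≤ Fintype.card V := hnd.length_le_card
  obtain ⟨w, c, hnil, hnd, hlen⟩ := Nat.sSup_mem h𝒮ne h𝒮bdd
  have hmax : ∀ l ∈ 𝒮, l ≤ sSup 𝒮 := fun l hl => le_csSup h𝒮bdd hl
  have h3L : 3 ≤ c.length := by
    have h1 : c₀.length ≤ sSup 𝒮 := hmax _ ⟨u₀, c₀, hc₀.not_nil, hc₀.support_nodup, rfl⟩
    have h2 := hc₀.three_le_length
    omega
  by_cases hcov : ∀ y : V, y ∈ c.support
  · exact hG (fun _ => ⟨w, c, isHamiltonian_of_cover c h3L hnd hcov⟩)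
  push_neg at hcov
  obtain ⟨v, hv⟩ := hcov
  -- the component of v in G - C
  set s : Set V := {x : V | x ∉ c.support} with hs
  have hvs : v ∈ s := hv
  set Hset : Set V := {x : V | ∃ hx : x ∈ s, (G.induce s).Reachable ⟨x, hx⟩ ⟨v, hvs⟩} with hH
  have hHC : ∀ x ∈ Hset, x ∉ c.support := fun x hx => hx.1
  have hvH : v ∈ Hset := ⟨hvs, Reachable.refl _⟩
  have hclosed : ∀ x ∈ Hset, ∀ y : V, G.Adj x y → y ∉ c.support → y ∈ Hset := by
    rintro x ⟨hx, hr⟩ y hadj hy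
    refine ⟨hy, ?_⟩
    have hstep : (G.induce s).Adj ⟨y, hy⟩ ⟨x, hx⟩ := hadj.symm
    exact hstep.reachable.trans hr
  -- paths within the component
  have hpath : ∀ h₀ h₁ : V, h₀ ∈ Hset → h₁ ∈ Hset →
      ∃ r : G.Walk h₀ h₁, r.support.Nodup ∧ ∀ y ∈ r.support, y ∈ Hset := by
    rintro h₀ h₁ ⟨hx0, hr0⟩ ⟨hx1, hr1⟩
    obtain ⟨W⟩ := hr0.trans hr1.symm
    set Wp := W.toPath with hWp
    set ι : G.induce s →g G := ⟨Subtype.val, fun {a b} h => h⟩ with hι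
    refine ⟨((Wp : (G.induce s).Walk ⟨h₀, hx0⟩ ⟨h₁, hx1⟩).map ι).copy rfl rfl, ?_, ?_⟩
    · rw [SimpleGraph.Walk.support_copy]
      exact (SimpleGraph.Walk.map_isPath_of_injective Subtype.val_injective Wp.2).support_nodup
    · intro y hy
      rw [SimpleGraph.Walk.support_copy, SimpleGraph.Walk.support_map, List.mem_map] at hy
      obtain ⟨z, hz, rfl⟩ := hy
      have hreach : (G.induce s).Reachable ⟨h₀, hx0⟩ z :=
        ((Wp : (G.induce s).Walk ⟨h₀, hx0⟩ ⟨h₁, hx1⟩).takeUntil z hz).reachable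
      exact ⟨z.2, hreach.symm.trans hr0⟩
  -- surgeries rule out successor adjacencies
  have hS1 : ∀ (t : V) (ht : t ∈ c.support), (∃ h ∈ Hset, G.Adj t h) →
      ¬ ∃ h' ∈ Hset, G.Adj ((c.rotate _ ht).getVert 1) h' := by
    rintro t ht ⟨h₀, hh₀, hth₀⟩ ⟨h₁, hh₁, hxh₁⟩
    obtain ⟨r, hrnd, hrmem⟩ := hpath h₀ h₁ hh₀ hh₁
    obtain ⟨u', c', h1, h2, h3⟩ := surgery1 c h3L hnd ht r hrnd
      (fun y hy => hHC _ (hrmem y hy)) hth₀ hxh₁.symm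
    have := hmax _ ⟨u', c', h1, h2, rfl⟩
    omega
  have hS2 : ∀ (t₁ t₂ : V) (ht₁ : t₁ ∈ c.support) (ht₂ : t₂ ∈ c.support), t₁ ≠ t₂ →
      (∃ h ∈ Hset, G.Adj t₁ h) → (∃ h ∈ Hset, G.Adj t₂ h) →
      ¬ G.Adj ((c.rotate _ ht₁).getVert 1) ((c.rotate _ ht₂).getVert 1) := by
    rintro t₁ t₂ ht₁ ht₂ hne ⟨h₀, hh₀, h10⟩ ⟨h₁, hh₁, h21⟩ hadj
    obtain ⟨r, hrnd, hrmem⟩ := hpath h₀ h₁ hh₀ hh₁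
    obtain ⟨u', c', h1, h2, h3⟩ := surgery2 c h3L hnd ht₁ ht₂ hne r hrnd
      (fun y hy => hHC _ (hrmem y hy)) h10 h21.symm hadj
    have := hmax _ ⟨u', c', h1, h2, rfl⟩
    omega
  -- the attachment set T
  set T : Finset V := Finset.univ.filter (fun x => x ∈ c.support ∧ ∃ h ∈ Hset, G.Adj x h)
    with hT
  have hTmem : ∀ t, t ∈ T ↔ (t ∈ c.support ∧ ∃ h ∈ Hset, G.Adj t h) := by
    intro t
    rw [hT, Finset.mem_filter]
    simp
  -- some cycle vertex is not in T
  have hysep : ∃ y, y ∈ c.support ∧ y ∉ T := by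
    by_contra hys
    push_neg at hys
    have hw : w ∈ c.support := SimpleGraph.Walk.start_mem_support c
    have hwT := (hTmem w).mp (hys w hw)
    have hsucc : (c.rotate _ hw).getVert 1 ∈ c.support := succ_mem_support c hnil hw
    have hsT := (hTmem _).mp (hys _ hsucc)
    exact hS1 w hw hwT.2 hsT.2
  obtain ⟨y, hyc, hyT⟩ := hysep
  -- T is a separator, so κ ≤ |T|
  have hkT : vertexConnectivity G ≤ T.card := by
    refine vc_le_of_separator G T ?_
    intro hcon
    have hvT : v ∉ T := fun h => hv ((hTmem v).mp h).1
    have hvm : v ∈ ((↑T : Set V)ᶜ) := by simpa using hvT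
    have hym : y ∈ ((↑T : Set V)ᶜ) := by simpa using hyT
    have key : ∀ (a b : ↥((↑T : Set V)ᶜ)) (W : (G.induce ((↑T : Set V)ᶜ)).Walk a b),
        (a : V) ∈ Hset → (b : V) ∈ Hset := by
      intro a b W
      induction W with
      | nil => exact id
      | cons h q ih =>
        rename_i a' z _
        intro ha
        apply ih
        have hadj : G.Adj (a' : V) (z : V) := h
        have hzT : (z : V) ∉ T := by
          have h2 := z.2
          rw [Set.mem_compl_iff, Finset.mem_coe] at h2
          exact h2
        by_cases hzc : (z : V) ∈ c.support
        · exact absurd ((hTmem _).mpr ⟨hzc, (a' : V), ha, hadj.symm⟩) hzT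
        · exact hclosed _ ha _ hadj hzc
    obtain ⟨W⟩ := hcon.preconnected ⟨v, hvm⟩ ⟨y, hym⟩
    exact hHC y (key _ _ W hvH) hyc
  -- choose a κ-subset of T and take successors
  obtain ⟨T', hT'T, hT'card⟩ := Finset.exists_subset_card_eq hkT
  have hT'c : ∀ t : {x // x ∈ T'}, (t : V) ∈ c.support :=
    fun t => ((hTmem (t : V)).mp (hT'T t.2)).1
  have hT'H : ∀ t : {x // x ∈ T'}, ∃ h ∈ Hset, G.Adj (t : V) h :=
    fun t => ((hTmem (t : V)).mp (hT'T t.2)).2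
  set f : {x // x ∈ T'} → V := fun t => (c.rotate _ (hT'c t)).getVert 1 with hf
  set A : Finset V := T'.attach.image f ∪ {v} with hA
  have hfc : ∀ t, f t ∈ c.support := fun t => succ_mem_support c hnil (hT'c t)
  have hvimg : v ∉ T'.attach.image f := by
    intro hvi
    rw [Finset.mem_image] at hvi
    obtain ⟨t, _, hft⟩ := hvi
    exact hv (hft ▸ hfc t)
  have hinj : Set.InjOn f ↑T'.attach := by
    intro a _ b _ hab
    exact Subtype.ext (succ_inj c hnil hnd (hT'c a) (hT'c b) hab)
  have hAcard : A.card = vertexConnectivity G + 1 := by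
    rw [hA, Finset.card_union_of_disjoint (Finset.disjoint_singleton_right.mpr hvimg),
      Finset.card_singleton, Finset.card_image_of_injOn hinj, Finset.card_attach, hT'card]
  have hind : ∀ a ∈ A, ∀ b ∈ A, ¬ G.Adj a b := by
    intro a ha b hb hadj
    rw [hA, Finset.mem_union, Finset.mem_singleton] at ha hb
    rcases ha with ha | hav
    · obtain ⟨t₁, _, hft₁⟩ := Finset.mem_image.mp ha
      rcases hb with hb | hbv
      · obtain ⟨t₂, _, hft₂⟩ := Finset.mem_image.mp hb
        rw [← hft₁, ← hft₂] at hadj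
        by_cases h12 : (t₁ : V) = (t₂ : V)
        · have heq : f t₁ = f t₂ := by
            congr 1
            exact Subtype.ext h12
          rw [heq] at hadj
          exact hadj.ne rfl
        · exact hS2 _ _ (hT'c t₁) (hT'c t₂) h12 (hT'H t₁) (hT'H t₂) hadj
      · rw [← hft₁, hbv] at hadj
        exact hS1 _ (hT'c t₁) (hT'H t₁) ⟨v, hvH, hadj⟩
    · rcases hb with hb | hbv
      · obtain ⟨t₂, _, hft₂⟩ := Finset.mem_image.mp hb
        rw [hav, ← hft₂] at hadj
        exact hS1 _ (hT'c t₂) (hT'H t₂) ⟨v, hvH, hadj.symm⟩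
      · rw [hav, hbv] at hadj
        exact hadj.ne rfl
  exact no_indep_set G hn hκ hm hforb A hAcard hind
end

section
/- Let G be a non-Hamiltonian graph with κ(G) = m(G) = s ≥ 2 and structure as established in the proof: longest cycle C = u₁u₁⁺⋯uₛuₛ⁺u₁, every vertex outside C adjacent exactly to {u₁,...,uₛ}, the set of vertices outside C independent, and uᵢ⁺uⱼ ∈ E for all i,j. Then G satisfies K_{s,s+1} ⊆ G ⊆ K_s ∨ ((n−s)·K_1) where n = |V(G)|, i.e., G ∈ F with p = s and q = n − s ≥ s + 1. -/
open SimpleGraph Finset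

namespace StmtAux

variable {V : Type*} {G : SimpleGraph V}

lemma support_get {a b : V} (p : G.Walk a b) : ∀ (n : ℕ) (h : n < p.support.length),
    p.support.get ⟨n, h⟩ = p.getVert n := by
  induction p with
  | nil => intro n h; simp only [Walk.support_nil, List.length_cons, List.length_nil] at h
           interval_cases n <;> simp [Walk.getVert]
  | cons hadj q ih =>
      intro n h
      cases n with
      | zero => simp [Walk.getVert]
      | succ m =>
          simp only [Walk.support_cons, List.length_cons] at h
          simpa [Walk.support_cons] using ih m (by omega)

lemma cycle_getVert_inj {a : V} {c : G.Walk a a} (hc : c.IsCycle) {m m' : ℕ}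
    (h1 : 1 ≤ m) (h2 : m ≤ c.length) (h1' : 1 ≤ m') (h2' : m' ≤ c.length)
    (heq : c.getVert m = c.getVert m') : m = m' := by
  have hnd : c.support.tail.Nodup := hc.support_nodup
  have hlen : c.support.length = c.length + 1 := c.length_support
  have htl : c.support.tail.length = c.length := by
    rw [List.length_tail, hlen]; omega
  have hget : ∀ (k : ℕ) (hk : k < c.support.tail.length),
      c.support.tail.get ⟨k, hk⟩ = c.getVert (k + 1) := by
    intro k hk
    have hk' : k + 1 < c.support.length := by omega
    rw [List.get_tail c.support k hk hk']
    exact support_get c (k + 1) hk'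
  have hm : m - 1 < c.support.tail.length := by omega
  have hm' : m' - 1 < c.support.tail.length := by omega
  have e1 : c.support.tail.get ⟨m - 1, hm⟩ = c.getVert m := by
    rw [hget]; congr 1; omega
  have e2 : c.support.tail.get ⟨m' - 1, hm'⟩ = c.getVert m' := by
    rw [hget]; congr 1; omega
  have := (hnd.get_inj_iff (i := ⟨m - 1, hm⟩) (j := ⟨m' - 1, hm'⟩)).1
    (by rw [e1, e2, heq])
  have : m - 1 = m' - 1 := congrArg Fin.val this
  omega

lemma exists_walk : ∀ (l : List V) (a b : V), List.Chain G.Adj a (l ++ [b]) →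
    ∃ w : G.Walk a b, w.support = a :: (l ++ [b]) := by
  intro l
  induction l with
  | nil =>
      intro a b h
      simp only [List.nil_append, List.Chain, List.chain_cons] at h
      exact ⟨Walk.cons h.1 Walk.nil, by simp⟩
  | cons c l ih =>
      intro a b h
      simp only [List.cons_append, List.Chain, List.chain_cons] at h
      obtain ⟨w, hw⟩ := ih c b h.2
      exact ⟨Walk.cons h.1 w, by simp [hw]⟩

lemma chain_blocks {ι : Type*} (f g : ι → V)
    (h1 : ∀ k k', G.Adj (g k) (f k')) (h2 : ∀ k, G.Adj (f k) (g k)) :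
    ∀ (K : List ι) (w : V), (∀ k, G.Adj w (f k)) → ∀ l : List V,
      (∀ k, List.Chain G.Adj (g k) l) → List.Chain G.Adj w l →
      List.Chain G.Adj w ((K.flatMap fun k => [f k, g k]) ++ l) := by
  intro K
  induction K with
  | nil => intro w _ l _ hw; simpa using hw
  | cons k K ih =>
      intro w hw l hl hwl
      simp only [List.flatMap_cons, List.cons_append, List.append_assoc]
      refine List.Chain.cons (hw k) (List.Chain.cons (h2 k) ?_)
      simpa using ih (g k) (h1 k) l hl (hl k)

lemma blocks_length {ι : Type*} (f g : ι → V) (K : List ι) :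
    (K.flatMap fun k => [f k, g k]).length = 2 * K.length := by
  induction K with
  | nil => simp
  | cons k K ih => simp [ih]; omega

lemma endpoints_edge_not_mem {x y : V} (p : G.Walk x y) (hp : p.IsPath) (hxy : x ≠ y)
    (hlen : 2 ≤ p.length) : s(x, y) ∉ p.edges := by
  cases p with
  | nil => exact absurd rfl hxy
  | cons h q =>
      rename_i c
      rw [Walk.edges_cons]
      intro hmem
      rw [Walk.cons_isPath_iff] at hp
      rcases List.mem_cons.1 hmem with heq | hmem'
      · rw [Sym2.eq_iff] at heq
        rcases heq with ⟨-, hyc⟩ | ⟨hxc, hyx⟩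
        · subst hyc
          cases q with
          | nil => simp [Walk.length_cons] at hlen
          | cons h' q' =>
              have : y ∈ q'.support := q'.end_mem_support
              have hnd := hp.1.support_nodup
              rw [Walk.support_cons, List.nodup_cons] at hnd
              exact hnd.1 this
        · exact hxy hyx.symm
      · exact hp.2 (q.fst_mem_support_of_mem_edges hmem')



lemma modval (s x : ℕ) (hx : x < 2 * s) : x % s = if x < s then x else x - s := by
  split_ifs with h
  · exact Nat.mod_eq_of_lt h
  · rw [Nat.mod_eq_sub_mod (by omega), Nat.mod_eq_of_lt (by omega)]

def partL (s : ℕ) (hs : 0 < s) (A B : ℕ) : List (Fin s) :=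
  (List.range (s - B + A - 1)).map fun m => ⟨(B + 1 + m) % s, Nat.mod_lt _ hs⟩

lemma partL_length (s : ℕ) (hs : 0 < s) (A B : ℕ) :
    (partL s hs A B).length = s - B + A - 1 := by simp [partL]

lemma partL_mem {s : ℕ} (hs : 0 < s) {A B : ℕ} (hAB : A < B) (hB : B < s) :
    ∀ k ∈ partL s hs A B, (k : ℕ) < A ∨ B < (k : ℕ) := by
  intro k hk
  simp only [partL, List.mem_map, List.mem_range] at hk
  obtain ⟨m, hm, rfl⟩ := hk
  simp only
  rw [modval s _ (by omega)]
  split_ifs <;> omega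

lemma partL_nodup {s : ℕ} (hs : 0 < s) {A B : ℕ} (hAB : A < B) (hB : B < s) :
    (partL s hs A B).Nodup := by
  rw [partL]
  refine List.nodup_range.map_on ?_
  intro m hm m' hm' heq
  rw [List.mem_range] at hm hm'
  have hval : (B + 1 + m) % s = (B + 1 + m') % s := congrArg Fin.val heq
  rw [modval s _ (by omega), modval s _ (by omega)] at hval
  split_ifs at hval <;> omega

def bwdL {s : ℕ} (A : ℕ) (b : Fin s) : List (Fin s) :=
  (List.range (↑b - A - 1)).map fun r => ⟨↑b - 1 - r, lt_of_le_of_lt (by omega) b.isLt⟩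

lemma bwdL_length {s : ℕ} (A : ℕ) (b : Fin s) : (bwdL A b).length = ↑b - A - 1 := by
  simp [bwdL]

lemma bwdL_mem {s : ℕ} {A : ℕ} {b : Fin s} :
    ∀ k ∈ bwdL A b, A < (k : ℕ) ∧ (k : ℕ) < ↑b := by
  intro k hk
  simp only [bwdL, List.mem_map, List.mem_range] at hk
  obtain ⟨r, hr, rfl⟩ := hk
  simp only
  omega

lemma bwdL_nodup {s : ℕ} {A : ℕ} {b : Fin s} : (bwdL A b).Nodup := by
  rw [bwdL]
  refine List.nodup_range.map_on ?_
  intro r hr r' hr' heq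
  rw [List.mem_range] at hr hr'
  have hval : (↑b - 1 - r : ℕ) = ↑b - 1 - r' := congrArg Fin.val heq
  omega

def Fmap {V : Type*} {s : ℕ} (u usucc : Fin s → V) (x₀ : V) : Option (Fin s × Bool) → V
  | none => x₀
  | some (k, false) => u k
  | some (k, true) => usucc k

lemma Fmap_inj {V : Type*} {s : ℕ} {u usucc : Fin s → V} {x₀ : V}
    (huinj : Function.Injective u) (husuccinj : Function.Injective usucc)
    (huus : ∀ k k', u k ≠ usucc k') (hx₀u : ∀ k, x₀ ≠ u k) (hx₀s : ∀ k, x₀ ≠ usucc k) :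
    Function.Injective (Fmap u usucc x₀) := by
  intro z z' h
  rcases z with _ | ⟨k, _ | _⟩ <;> rcases z' with _ | ⟨k', _ | _⟩ <;>
      simp only [Fmap] at h
  · rfl
  · exact absurd h (hx₀u k')
  · exact absurd h (hx₀s k')
  · exact absurd h.symm (hx₀u k)
  · rw [huinj h]
  · exact absurd h (huus k k')
  · exact absurd h.symm (hx₀s k)
  · exact absurd h.symm (huus k' k)
  · rw [husuccinj h]

lemma pair_blocks_nodup {s : ℕ} {K : List (Fin s)} (hK : K.Nodup) (t1 t2 : Bool)
    (h12 : t1 ≠ t2) :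
    (K.flatMap fun k => ([some (k, t1), some (k, t2)] : List (Option (Fin s × Bool)))).Nodup := by
  rw [List.nodup_flatMap]
  refine ⟨fun k _ => by simp [h12], ?_⟩
  refine hK.imp ?_
  intro k k' hne z hz hz'
  simp only [List.mem_cons, List.mem_singleton, List.not_mem_nil, or_false] at hz hz'
  rcases hz with rfl | rfl <;> rcases hz' with h | h <;>
    exact hne (congrArg Prod.fst (Option.some.inj h))

lemma key_aux {V : Type*} {G : SimpleGraph V} {s : ℕ} (hs : 2 ≤ s)
    (u usucc : Fin s → V) (x₀ : V)
    (hss : ∀ i j : Fin s, G.Adj (usucc i) (u j))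
    (hadjx₀ : ∀ i, G.Adj x₀ (u i))
    (huinj : Function.Injective u)
    (husuccinj : Function.Injective usucc)
    (huus : ∀ k k' : Fin s, u k ≠ usucc k')
    (hx₀u : ∀ k, x₀ ≠ u k) (hx₀s : ∀ k, x₀ ≠ usucc k)
    (a b : Fin s) (hab : (a : ℕ) < (b : ℕ)) (hadj : G.Adj (usucc a) (usucc b)) :
    ∃ (w₀ : V) (d : G.Walk w₀ w₀), d.IsCycle ∧ d.length = 2 * s + 1 := by
  have hs0 : 0 < s := by omega
  have hB : (b : ℕ) < s := b.isLt
  set P : List (Fin s) := partL s hs0 ↑a ↑b with hPdef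
  set BW : List (Fin s) := bwdL ↑a b with hBWdef
  set LV : List V :=
    u b :: ((BW.flatMap fun k => [usucc k, u k]) ++
      (x₀ :: ((P.flatMap fun k => [u k, usucc k]) ++ [u a]))) with hLVdef
  -- the chain
  have hrest : ∀ k : Fin s, List.Chain G.Adj (u k)
      (x₀ :: ((P.flatMap fun k => [u k, usucc k]) ++ ([u a] ++ [usucc a]))) := by
    intro k
    refine List.Chain.cons ((hadjx₀ k).symm) ?_
    have hre : (P.flatMap fun k => [u k, usucc k]) ++ ([u a] ++ [usucc a])
        = ((P ++ [a]).flatMap fun k => [u k, usucc k]) ++ ([] : List V) := by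
      simp
    rw [hre]
    exact chain_blocks u usucc hss (fun k => (hss k k).symm) (P ++ [a]) x₀ hadjx₀ []
      (fun _ => List.Chain.nil) List.Chain.nil
  have hchain : List.Chain G.Adj (usucc b) (LV ++ [usucc a]) := by
    rw [hLVdef]
    simp only [List.cons_append, List.append_assoc]
    refine List.Chain.cons (hss b b) ?_
    exact chain_blocks usucc u (fun k k' => (hss k' k).symm) (fun k => hss k k) BW (u b)
      (fun k => (hss k b).symm) _ hrest (hrest b)
  obtain ⟨p, hpsupp⟩ := exists_walk LV (usucc b) (usucc a) hchain
  -- index list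
  set Bf : List (Option (Fin s × Bool)) :=
    BW.flatMap (fun k => [some (k, true), some (k, false)]) with hBfdef
  set Pf : List (Option (Fin s × Bool)) :=
    P.flatMap (fun k => [some (k, false), some (k, true)]) with hPfdef
  set LI : List (Option (Fin s × Bool)) :=
    some (b, true) :: some (b, false) ::
      (Bf ++ none :: (Pf ++ [some (a, false), some (a, true)])) with hLIdef
  have hmapF : LI.map (Fmap u usucc x₀) = usucc b :: (LV ++ [usucc a]) := by
    rw [hLIdef, hLVdef, hBfdef, hPfdef]
    simp [Fmap, List.map_flatMap]
  have hsupport : p.support = LI.map (Fmap u usucc x₀) := by rw [hpsupp, hmapF]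
  -- membership characterizations
  have hBmem : ∀ z ∈ Bf, ∃ k : Fin s, ((a : ℕ) < ↑k ∧ (k : ℕ) < ↑b) ∧ ∃ t, z = some (k, t) := by
    intro z hz
    rw [hBfdef, List.mem_flatMap] at hz
    obtain ⟨k, hk, hz⟩ := hz
    simp only [List.mem_cons, List.mem_singleton, List.not_mem_nil, or_false] at hz
    refine ⟨k, bwdL_mem k hk, ?_⟩
    rcases hz with rfl | rfl
    exacts [⟨true, rfl⟩, ⟨false, rfl⟩]
  have hPmem : ∀ z ∈ Pf, ∃ k : Fin s, ((k : ℕ) < ↑a ∨ (b : ℕ) < ↑k) ∧ ∃ t, z = some (k, t) := by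
    intro z hz
    rw [hPfdef, List.mem_flatMap] at hz
    obtain ⟨k, hk, hz⟩ := hz
    simp only [List.mem_cons, List.mem_singleton, List.not_mem_nil, or_false] at hz
    refine ⟨k, partL_mem hs0 hab hB k hk, ?_⟩
    rcases hz with rfl | rfl
    exacts [⟨false, rfl⟩, ⟨true, rfl⟩]
  have hnotb : ∀ t : Bool,
      (some (b, t) : Option (Fin s × Bool)) ∉
        Bf ++ none :: (Pf ++ [some (a, false), some (a, true)]) := by
    intro t hmem
    rw [List.mem_append, List.mem_cons, List.mem_append] at hmem
    rcases hmem with h | h | h | h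
    · obtain ⟨k, hk, t', heq⟩ := hBmem _ h
      have : (b : ℕ) = (k : ℕ) := congrArg (Fin.val ∘ Prod.fst) (Option.some.inj heq)
      omega
    · exact nomatch h
    · obtain ⟨k, hk, t', heq⟩ := hPmem _ h
      have : (b : ℕ) = (k : ℕ) := congrArg (Fin.val ∘ Prod.fst) (Option.some.inj heq)
      omega
    · simp only [List.mem_cons, List.mem_singleton, List.not_mem_nil, or_false] at h
      rcases h with h | h <;>
        (have : (b : ℕ) = (a : ℕ) := congrArg (Fin.val ∘ Prod.fst) (Option.some.inj h); omega)
  have hLInd : LI.Nodup := by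
    rw [hLIdef]
    rw [List.nodup_cons, List.nodup_cons]
    refine ⟨?_, ?_, ?_⟩
    · rw [List.mem_cons]
      rintro (h | h)
      · simp at h
      · exact hnotb true h
    · exact hnotb false
    · rw [List.nodup_append]
      refine ⟨?_, ?_, ?_⟩
      · exact hBfdef ▸ pair_blocks_nodup bwdL_nodup true false (by simp)
      · rw [List.nodup_cons]
        constructor
        · intro h
          rw [List.mem_append] at h
          rcases h with h | h
          · obtain ⟨k, hk, t', heq⟩ := hPmem _ h
            exact nomatch heq
          · simp only [List.mem_cons, List.mem_singleton, List.not_mem_nil, or_false] at h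
            rcases h with h | h <;> exact nomatch h
        · rw [List.nodup_append]
          refine ⟨?_, by simp, ?_⟩
          · exact hPfdef ▸ pair_blocks_nodup (partL_nodup hs0 hab hB) false true (by simp)
          · rintro z hz _ hz' rfl
            obtain ⟨k, hk, t', rfl⟩ := hPmem _ hz
            simp only [List.mem_cons, List.mem_singleton, List.not_mem_nil, or_false] at hz'
            rcases hz' with h | h <;>
              (have : (k : ℕ) = (a : ℕ) := congrArg (Fin.val ∘ Prod.fst) (Option.some.inj h);
                omega)
      · rintro z hz _ hz' rfl
        obtain ⟨k, hk, t', rfl⟩ := hBmem _ hz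
        rw [List.mem_cons, List.mem_append] at hz'
        rcases hz' with h | h | h
        · exact nomatch h
        · obtain ⟨k', hk', t'', heq⟩ := hPmem _ h
          have : (k : ℕ) = (k' : ℕ) := congrArg (Fin.val ∘ Prod.fst) (Option.some.inj heq)
          omega
        · simp only [List.mem_cons, List.mem_singleton, List.not_mem_nil, or_false] at h
          rcases h with h | h <;>
            (have : (k : ℕ) = (a : ℕ) := congrArg (Fin.val ∘ Prod.fst) (Option.some.inj h);
              omega)
  have hFinj : Function.Injective (Fmap u usucc x₀) :=
    Fmap_inj huinj husuccinj huus hx₀u hx₀s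
  have hpnodup : p.support.Nodup := by
    rw [hsupport]; exact hLInd.map hFinj
  have hppath : p.IsPath := Walk.IsPath.mk' hpnodup
  have hLIlen : LI.length = 2 * s + 1 := by
    rw [hLIdef, hBfdef, hPfdef, hBWdef, hPdef]
    simp only [List.length_cons, List.length_append, List.length_nil, blocks_length,
      bwdL_length, partL_length]
    omega
  have hplen : p.length = 2 * s := by
    have h1 := p.length_support
    rw [hsupport, List.length_map, hLIlen] at h1
    omega
  have hne : usucc b ≠ usucc a := by
    intro h
    have := congrArg Fin.val (husuccinj h)
    omega
  have hedge : s(usucc a, usucc b) ∉ p.edges := by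
    intro hm
    exact endpoints_edge_not_mem p hppath hne (by omega) (by rwa [Sym2.eq_swap] at hm)
  refine ⟨usucc a, Walk.cons hadj p, (Walk.cons_isCycle_iff p hadj).2 ⟨hppath, hedge⟩, ?_⟩
  rw [Walk.length_cons, hplen]

end StmtAux

/-- With the structure established in the proof, `G` satisfies
`K_{s,s+1} ⊆ G ⊆ K_s ∨ ((n−s)·K_1)`: every vertex outside `{u₁,…,uₛ}` is adjacent to all
the `uᵢ`, the complement of `{u₁,…,uₛ}` is independent, and `n − s ≥ s + 1`;
i.e. `G ∈ F` with `p = s`, `q = n − s`. -/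

theorem stmt_13 {V : Type*} [Fintype V] [DecidableEq V] (G : SimpleGraph V)
    (hnotham : ¬ G.IsHamiltonian)
    (s : ℕ) (hs : 2 ≤ s)
    (hκ : vertexConnectivity G = s) (hm : matchingNumber G = s)
    {v : V} (c : G.Walk v v) (hc : c.IsCycle)
    (hlong : ∀ (w : V) (d : G.Walk w w), d.IsCycle → d.length ≤ c.length)
    (hlen : c.length = 2 * s)
    (u usucc : Fin s → V) (huinj : Function.Injective u)
    (hu : ∀ i : Fin s, c.getVert (2 * ↑i) = u i)
    (husucc : ∀ i : Fin s, c.getVert (2 * ↑i + 1) = usucc i)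
    (x₀ : V) (hx₀ : x₀ ∉ c.support)
    (hadjx₀ : ∀ i, G.Adj x₀ (u i))
    (hout_adj : ∀ x : V, x ∉ c.support → ∀ i, G.Adj x (u i))
    (hout_only : ∀ x : V, x ∉ c.support → ∀ w, G.Adj x w → ∃ i, w = u i)
    (hout_indep : ∀ x y : V, x ∉ c.support → y ∉ c.support → ¬ G.Adj x y)
    (hss : ∀ i j : Fin s, G.Adj (usucc i) (u j)) :
    (∀ i : Fin s, ∀ x : V, (∀ j, x ≠ u j) → G.Adj (u i) x) ∧
    (∀ x y : V, (∀ j, x ≠ u j) → (∀ j, y ≠ u j) → ¬ G.Adj x y) ∧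
    s + 1 ≤ Fintype.card V - s := by
  classical
  have hends : c.getVert (2 * s) = c.getVert 0 := by
    rw [← hlen, Walk.getVert_length, Walk.getVert_zero]
  have hidx_u : ∀ k : Fin s, c.getVert (if (k : ℕ) = 0 then 2 * s else 2 * (k : ℕ)) = u k := by
    intro k
    split_ifs with h
    · have h2 := hu k
      rw [h, mul_zero] at h2
      rw [hends]; exact h2
    · exact hu k
  have huus : ∀ k k' : Fin s, u k ≠ usucc k' := by
    intro k k' heq
    have hk : (k : ℕ) < s := k.isLt
    have hk' : (k' : ℕ) < s := k'.isLt
    have hinj := StmtAux.cycle_getVert_inj hc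
      (m := if (k : ℕ) = 0 then 2 * s else 2 * (k : ℕ)) (m' := 2 * (k' : ℕ) + 1)
      (by split_ifs <;> omega) (by rw [hlen]; split_ifs <;> omega)
      (by omega) (by rw [hlen]; omega)
      (by rw [hidx_u, husucc]; exact heq)
    split_ifs at hinj <;> omega
  have husuccinj : Function.Injective usucc := by
    intro k k' heq
    have hk : (k : ℕ) < s := k.isLt
    have hk' : (k' : ℕ) < s := k'.isLt
    have hinj := StmtAux.cycle_getVert_inj hc
      (m := 2 * (k : ℕ) + 1) (m' := 2 * (k' : ℕ) + 1)
      (by omega) (by rw [hlen]; omega) (by omega) (by rw [hlen]; omega)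
      (by rw [husucc, husucc]; exact heq)
    exact Fin.ext (by omega)
  have hx₀gv : ∀ n, n ≤ c.length → x₀ ≠ c.getVert n := by
    intro n hn heq
    exact hx₀ (Walk.mem_support_iff_exists_getVert.2 ⟨n, heq.symm, hn⟩)
  have hx₀u : ∀ k, x₀ ≠ u k := by
    intro k
    have hk : (k : ℕ) < s := k.isLt
    have := hx₀gv (if (k : ℕ) = 0 then 2 * s else 2 * (k : ℕ))
      (by rw [hlen]; split_ifs <;> omega)
    rwa [hidx_u] at this
  have hx₀s : ∀ k, x₀ ≠ usucc k := by
    intro k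
    have hk : (k : ℕ) < s := k.isLt
    have := hx₀gv (2 * (k : ℕ) + 1) (by rw [hlen]; omega)
    rwa [husucc] at this
  have hcardV : 2 * s + 1 ≤ Fintype.card V := by
    have hFinj := StmtAux.Fmap_inj huinj husuccinj huus hx₀u hx₀s
    have hle := Fintype.card_le_of_injective _ hFinj
    simp only [Fintype.card_option, Fintype.card_prod, Fintype.card_fin,
      Fintype.card_bool] at hle
    omega
  have hstruct : ∀ x, x ∈ c.support → (∃ j, x = u j) ∨ (∃ j, x = usucc j) := by
    intro x hx
    obtain ⟨n, hget, hle⟩ := Walk.mem_support_iff_exists_getVert.1 hx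
    rw [hlen] at hle
    rcases Nat.lt_or_ge n (2 * s) with hn | hn
    · rcases Nat.even_or_odd n with ⟨t, ht⟩ | ⟨t, ht⟩
      · have ht2 : t < s := by omega
        have hn2 : n = 2 * t := by omega
        subst hn2
        exact Or.inl ⟨⟨t, ht2⟩, by rw [← hget]; exact hu ⟨t, ht2⟩⟩
      · have ht2 : t < s := by omega
        have hn2 : n = 2 * t + 1 := by omega
        subst hn2
        exact Or.inr ⟨⟨t, ht2⟩, by rw [← hget]; exact husucc ⟨t, ht2⟩⟩
    · have hn2 : n = 2 * s := by omega
      subst hn2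
      have h0 : 0 < s := by omega
      have h2 := hu ⟨0, h0⟩
      rw [show (2 * ((⟨0, h0⟩ : Fin s) : ℕ)) = 0 from rfl] at h2
      exact Or.inl ⟨⟨0, h0⟩, by rw [← hget, hends]; exact h2⟩
  have key : ∀ a b : Fin s, (a : ℕ) < (b : ℕ) → G.Adj (usucc a) (usucc b) → False := by
    intro a b hab hadj
    obtain ⟨w₀, d, hd, hdlen⟩ := StmtAux.key_aux hs u usucc x₀ hss hadjx₀ huinj husuccinj
      huus hx₀u hx₀s a b hab hadj
    have := hlong w₀ d hd
    rw [hdlen, hlen] at this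
    omega
  refine ⟨?_, ?_, by omega⟩
  · intro i x hxu
    by_cases hxs : x ∈ c.support
    · rcases hstruct x hxs with ⟨j, rfl⟩ | ⟨j, rfl⟩
      · exact absurd rfl (hxu j)
      · exact (hss j i).symm
    · exact (hout_adj x hxs i).symm
  · intro x y hxu hyu hadj
    by_cases hxs : x ∈ c.support
    · by_cases hys : y ∈ c.support
      · rcases hstruct x hxs with ⟨j, rfl⟩ | ⟨j, rfl⟩
        · exact hxu j rfl
        · rcases hstruct y hys with ⟨j', rfl⟩ | ⟨j', rfl⟩
          · exact hyu j' rfl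
          · rcases lt_trichotomy (j : ℕ) (j' : ℕ) with h | h | h
            · exact key j j' h hadj
            · exact G.ne_of_adj hadj (congrArg usucc (Fin.ext h))
            · exact key j' j h hadj.symm
      · obtain ⟨i, hi⟩ := hout_only y hys x hadj.symm
        exact hxu i hi
    · obtain ⟨i, hi⟩ := hout_only x hxs y hadj
      exact hyu i hi
end

section
/- If G is a graph with κ(G) ≥ 2 and m(G) < κ(G) (strict inequality), then G is Hamiltonian. -/
open SimpleGraph Finset

section Auxiliary

namespace StmtAux

open List

variable {V : Type*} {G : SimpleGraph V}




lemma walk_of_chain : ∀ (l : List V) (a b : V), l.Chain' G.Adj → l.head? = some a →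
    l.getLast? = some b → ∃ p : G.Walk a b, p.support = l
  | [], a, b, _, h, _ => by simp at h
  | [x], a, b, _, ha, hb => by
      simp only [head?_cons, Option.some.injEq] at ha
      simp only [getLast?_singleton, Option.some.injEq] at hb
      subst ha; subst hb
      exact ⟨Walk.nil, rfl⟩
  | x :: y :: t, a, b, hc, ha, hb => by
      simp only [head?_cons, Option.some.injEq] at ha
      subst ha
      obtain ⟨hadj, hc'⟩ := List.isChain_cons_cons.mp hc
      have hb' : (y :: t).getLast? = some b := by
        rwa [List.getLast?_cons_cons] at hb
      obtain ⟨q, hq⟩ := walk_of_chain (y :: t) y b hc' rfl hb'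
      exact ⟨Walk.cons hadj q, by simp [hq]⟩

lemma edge_ends_not_mem_path_edges {a b : V} (p : G.Walk a b) (hp : p.IsPath)
    (hlen : 2 ≤ p.length) : s(b, a) ∉ p.edges := by
  intro hmem
  cases p with
  | nil => simp at hlen
  | cons h q =>
    rename_i c
    have hcons := (Walk.cons_isPath_iff h q).mp hp
    have hab : a ≠ b := by
      intro h'; subst h'
      exact hcons.2 q.end_mem_support
    simp only [Walk.edges_cons, List.mem_cons] at hmem
    rcases hmem with heq | hmem'
    · rw [Sym2.eq_iff] at heq
      rcases heq with ⟨h1, h2⟩ | ⟨h1, h2⟩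
      · exact hab h1.symm
      · subst h1
        have hq : q = Walk.nil := Walk.isPath_iff_eq_nil.mp hcons.1
        subst hq
        simp [Walk.length_cons] at hlen
    · exact hcons.2 (Walk.snd_mem_support_of_mem_edges q hmem')

lemma isHamiltonian_of_cycleList [Fintype V] [DecidableEq V] (l : List V) (hne : l ≠ [])
    (hnd : l.Nodup) (hmem : ∀ v, v ∈ l) (hc : l.Chain' G.Adj) (h3 : 3 ≤ l.length)
    (hclose : G.Adj (l.getLast hne) (l.head hne)) : G.IsHamiltonian := by
  set a := l.head hne with ha
  set b := l.getLast hne with hb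
  obtain ⟨p, hp⟩ := walk_of_chain l a b hc (by rw [ha, List.head?_eq_head hne])
    (by rw [hb, List.getLast?_eq_getLast hne])
  have hpath : p.IsPath := by rw [Walk.isPath_def, hp]; exact hnd
  have hplen : 2 ≤ p.length := by
    have := p.length_support
    rw [hp] at this
    omega
  have hcyc : (Walk.cons hclose p).IsCycle := by
    rw [Walk.cons_isCycle_iff]
    exact ⟨hpath, edge_ends_not_mem_path_edges p hpath hplen⟩
  intro _
  refine ⟨b, Walk.cons hclose p, ?_⟩
  rw [Walk.isHamiltonianCycle_iff_isCycle_and_support_count_tail_eq_one]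
  refine ⟨hcyc, fun v => ?_⟩
  rw [Walk.support_cons, List.tail_cons, hp]
  exact List.count_eq_one_of_mem hnd (hmem v)

/-- A "cyclic chain": chain plus closing adjacency (in `Option` form). -/
def CycList (G : SimpleGraph V) (l : List V) : Prop :=
  l.Chain' G.Adj ∧ ∀ x ∈ l.getLast?, ∀ y ∈ l.head?, G.Adj x y

lemma CycList.rotate_one {l : List V} (h : CycList G l) : CycList G (l.rotate 1) := by
  obtain ⟨hc, hcl⟩ := h
  cases l with
  | nil => exact ⟨List.isChain_nil, by simp⟩
  | cons x t =>
    rw [List.rotate_cons_succ, List.rotate_zero]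
    rcases eq_or_ne t [] with rfl | hte
    · exact ⟨by simpa using hc, by simpa using hcl⟩
    obtain ⟨hhead, hct⟩ := List.isChain_cons.mp hc
    constructor
    · rw [List.Chain', List.isChain_append]
      refine ⟨hct, List.isChain_singleton x, fun p hp q hq => ?_⟩
      simp only [List.head?_cons, Option.mem_def, Option.some.injEq] at hq
      subst hq
      apply hcl
      · exact List.mem_getLast?_cons hp
      · simp
    · intro p hp q hq
      rw [List.getLast?_append_of_ne_nil _ (by simp)] at hp
      simp only [List.getLast?_singleton, Option.mem_def, Option.some.injEq] at hp
      subst hp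
      rw [List.head?_append_of_ne_nil _ hte] at hq
      exact hhead q hq

lemma CycList.rotate {l : List V} (h : CycList G l) (n : ℕ) : CycList G (l.rotate n) := by
  induction n with
  | zero => simpa using h
  | succ k ih =>
    have := ih.rotate_one
    rwa [List.rotate_rotate, Nat.add_comm k 1, Nat.add_comm 1 k] at this

lemma exists_rotate_getLast_eq {l : List V} {z : V} (hz : z ∈ l) :
    ∃ n, ∃ hne : l.rotate n ≠ [], (l.rotate n).getLast hne = z := by
  obtain ⟨i, hi, hget⟩ := List.getElem_of_mem hz
  have hlen : 0 < l.length := by omega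
  refine ⟨i + 1, ?_, ?_⟩
  · intro hnil
    have := List.length_rotate l (i + 1)
    rw [hnil] at this
    simp at this
    omega
  · rw [List.getLast_eq_getElem, List.getElem_rotate]
    have h1 : (l.rotate (i + 1)).length = l.length := List.length_rotate l (i+1)
    have h2 : (l.length - 1 + (i + 1)) % l.length = i := by
      have : l.length - 1 + (i + 1) = l.length + i := by omega
      rw [this, Nat.add_mod_left, Nat.mod_eq_of_lt hi]
    simp_rw [h1, h2]
    exact hget

section Crossing
variable [Fintype V] [DecidableEq V] [DecidableRel G.Adj]

lemma crossing_lemma {l : List V} (hne : l ≠ []) (hnd : l.Nodup) (h2 : 2 ≤ l.length)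
    (hA : ∀ x, G.Adj (l.head hne) x → x ∈ l) (hB : ∀ x, G.Adj (l.getLast hne) x → x ∈ l)
    (hsum : l.length + 1 ≤ G.degree (l.head hne) + G.degree (l.getLast hne)) :
    ∃ i, i + 1 < l.length ∧ G.Adj (l.head hne) (l.getD (i+1) (l.head hne)) ∧
      G.Adj (l.getLast hne) (l.getD i (l.head hne)) := by
  set a := l.head hne with ha
  set b := l.getLast hne with hb
  have haeq : l.getD 0 a = a := by
    rw [List.getD_eq_getElem l a (by omega), List.getElem_zero (by omega)]
  have hbeq : l.getD (l.length - 1) a = b := by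
    rw [List.getD_eq_getElem l a (by omega), hb, List.getLast_eq_getElem hne]
  have hgetD : ∀ x (hx : x ∈ l), l.getD (l.idxOf x) a = x := by
    intro x hx
    have hidx : l.idxOf x < l.length := List.idxOf_lt_length_iff.mpr hx
    rw [List.getD_eq_getElem l a hidx]
    exact List.getElem_idxOf hidx
  set A : Finset ℕ := (Finset.range (l.length - 1)).filter
      (fun i => G.Adj a (l.getD (i+1) a)) with hAdef
  set B : Finset ℕ := (Finset.range (l.length - 1)).filter
      (fun i => G.Adj b (l.getD i a)) with hBdef
  have hcardA : G.degree a ≤ A.card := by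
    apply Finset.card_le_card_of_injOn (fun x => l.idxOf x - 1)
    · intro x hx
      rw [Finset.mem_coe, SimpleGraph.mem_neighborFinset] at hx
      have hxl : x ∈ l := hA x hx
      have hidx : l.idxOf x < l.length := List.idxOf_lt_length_iff.mpr hxl
      have hidx0 : l.idxOf x ≠ 0 := by
        intro h0
        have := hgetD x hxl
        rw [h0, haeq] at this
        exact G.ne_of_adj hx this
      rw [Finset.mem_coe, hAdef, Finset.mem_filter, Finset.mem_range]
      beta_reduce
      refine ⟨by omega, ?_⟩
      have h1 : l.idxOf x - 1 + 1 = l.idxOf x := by omega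
      rw [h1, hgetD x hxl]
      exact hx
    · intro x hx y hy hxy
      rw [Finset.mem_coe, SimpleGraph.mem_neighborFinset] at hx hy
      have hxl : x ∈ l := hA x hx
      have hyl : y ∈ l := hA y hy
      have hx0 : l.idxOf x ≠ 0 := by
        intro h0
        have := hgetD x hxl
        rw [h0, haeq] at this
        exact G.ne_of_adj hx this
      have hy0 : l.idxOf y ≠ 0 := by
        intro h0
        have := hgetD y hyl
        rw [h0, haeq] at this
        exact G.ne_of_adj hy this
      have hidx : l.idxOf x = l.idxOf y := by
        simp only at hxy; omega
      rw [← hgetD x hxl, ← hgetD y hyl, hidx]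
  have hcardB : G.degree b ≤ B.card := by
    apply Finset.card_le_card_of_injOn (fun x => l.idxOf x)
    · intro x hx
      rw [Finset.mem_coe, SimpleGraph.mem_neighborFinset] at hx
      have hxl : x ∈ l := hB x hx
      have hidx : l.idxOf x < l.length := List.idxOf_lt_length_iff.mpr hxl
      have hlast : l.idxOf x ≠ l.length - 1 := by
        intro h0
        have := hgetD x hxl
        rw [h0, hbeq] at this
        exact G.ne_of_adj hx this
      rw [Finset.mem_coe, hBdef, Finset.mem_filter, Finset.mem_range]
      beta_reduce
      refine ⟨by omega, ?_⟩
      rw [hgetD x hxl]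
      exact hx
    · intro x hx y hy hxy
      rw [Finset.mem_coe, SimpleGraph.mem_neighborFinset] at hx hy
      simp only at hxy
      rw [← hgetD x (hB x hx), ← hgetD y (hB y hy), hxy]
  have hsub : A ∪ B ⊆ Finset.range (l.length - 1) := by
    intro i hi
    rcases Finset.mem_union.mp hi with h | h
    · exact Finset.mem_of_mem_filter i h
    · exact Finset.mem_of_mem_filter i h
  have hunion : (A ∪ B).card ≤ l.length - 1 := by
    simpa using Finset.card_le_card hsub
  have hint : 0 < (A ∩ B).card := by
    have := Finset.card_union_add_card_inter A B
    omega
  obtain ⟨i, hi⟩ := Finset.card_pos.mp hint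
  rw [Finset.mem_inter, hAdef, hBdef, Finset.mem_filter, Finset.mem_filter,
    Finset.mem_range] at hi
  exact ⟨i, by omega, hi.1.2, hi.2.2⟩

end Crossing

lemma cycList_of_crossing {l : List V} (hne : l ≠ []) (hc : l.Chain' G.Adj)
    (hGsymm : ∀ {x y}, G.Adj x y → G.Adj y x) {i : ℕ} (hi : i + 1 < l.length)
    (hAi : G.Adj (l.head hne) (l.getD (i+1) (l.head hne)))
    (hBi : G.Adj (l.getLast hne) (l.getD i (l.head hne))) :
    ∃ c : List V, c.Perm l ∧ CycList G c := by
  set a := l.head hne with ha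
  refine ⟨l.take (i+1) ++ (l.drop (i+1)).reverse, ?_, ?_, ?_⟩
  · calc l.take (i+1) ++ (l.drop (i+1)).reverse
        ~ l.take (i+1) ++ l.drop (i+1) := List.Perm.append_left _ (List.reverse_perm _)
      _ = l := List.take_append_drop _ _
  · -- chain'
    rw [List.Chain', List.isChain_append]
    refine ⟨hc.take _, ?_, ?_⟩
    · rw [List.isChain_reverse]
      exact (hc.drop _).imp (fun _ _ h => hGsymm h)
    · intro x hx y hy
      have htne : l.take (i+1) ≠ [] :=
        List.length_pos_iff.mp (by rw [List.length_take]; omega)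
      have hdne : l.drop (i+1) ≠ [] :=
        List.length_pos_iff.mp (by rw [List.length_drop]; omega)
      rw [List.getLast?_eq_getLast htne] at hx
      simp only [Option.mem_def, Option.some.injEq] at hx
      rw [List.head?_reverse, List.getLast?_eq_getLast hdne] at hy
      simp only [Option.mem_def, Option.some.injEq] at hy
      have hxv : x = l.getD i a := by
        rw [← hx, List.getLast_eq_getElem htne]
        have hlt : (l.take (i+1)).length - 1 < (l.take (i+1)).length := by
          rw [List.length_take]; omega
        rw [List.getElem_take, List.getD_eq_getElem l a (by omega)]
        congr 1
        rw [List.length_take]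
        omega
      have hyv : y = l.getLast hne := by
        rw [← hy, List.getLast_eq_getElem hdne, List.getElem_drop,
          List.getLast_eq_getElem hne]
        congr 1
        rw [List.length_drop]
        omega
      rw [hxv, hyv]
      exact hGsymm hBi
  · -- closing
    intro x hx y hy
    have hdne : l.drop (i+1) ≠ [] :=
      List.length_pos_iff.mp (by rw [List.length_drop]; omega)
    have hrne : (l.drop (i+1)).reverse ≠ [] := by simpa using hdne
    rw [List.getLast?_append_of_ne_nil _ hrne, List.getLast?_reverse,
      List.head?_eq_head hdne] at hx
    simp only [Option.mem_def, Option.some.injEq] at hx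
    have htne : l.take (i+1) ≠ [] :=
      List.length_pos_iff.mp (by rw [List.length_take]; omega)
    rw [List.head?_append_of_ne_nil _ htne, List.head?_eq_head htne] at hy
    simp only [Option.mem_def, Option.some.injEq] at hy
    have hxv : x = l.getD (i+1) a := by
      rw [← hx, List.head_eq_getElem hdne, List.getElem_drop,
        List.getD_eq_getElem l a (by omega)]
    have hyv : y = a := by
      rw [← hy, List.head_eq_getElem htne, List.getElem_take, ha,
        List.head_eq_getElem hne]
    rw [hxv, hyv]
    exact hGsymm hAi

theorem hamiltonian_of_strict_ore [Fintype V] [DecidableEq V] [DecidableRel G.Adj]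
    (hn : 3 ≤ Fintype.card V) (hdeg : ∀ v, Fintype.card V + 1 ≤ 2 * G.degree v) :
    G.IsHamiltonian := by
  have hV : Nonempty V := Fintype.card_pos_iff.mp (by omega)
  -- common neighbor / adjacency
  have hcommon : ∀ u v : V, u ≠ v → ¬ G.Adj u v → ∃ w, G.Adj u w ∧ G.Adj v w := by
    intro u v huv hnadj
    have hsub : G.neighborFinset u ∪ G.neighborFinset v ⊆
        (Finset.univ.erase u).erase v := by
      intro w hw
      rcases Finset.mem_union.mp hw with h | h
      · rw [SimpleGraph.mem_neighborFinset] at h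
        refine Finset.mem_erase.mpr ⟨?_, Finset.mem_erase.mpr ⟨(G.ne_of_adj h).symm, Finset.mem_univ _⟩⟩
        intro hwv; subst hwv; exact hnadj h
      · rw [SimpleGraph.mem_neighborFinset] at h
        refine Finset.mem_erase.mpr ⟨(G.ne_of_adj h).symm, Finset.mem_erase.mpr ⟨?_, Finset.mem_univ _⟩⟩
        intro hwu; subst hwu; exact hnadj (h.symm)
    have hcard2 : ((Finset.univ.erase u).erase v).card = Fintype.card V - 2 := by
      rw [Finset.card_erase_of_mem (Finset.mem_erase.mpr ⟨huv.symm, Finset.mem_univ _⟩),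
        Finset.card_erase_of_mem (Finset.mem_univ _), Finset.card_univ]
      omega
    have hcu : (G.neighborFinset u ∪ G.neighborFinset v).card ≤ Fintype.card V - 2 := by
      rw [← hcard2]; exact Finset.card_le_card hsub
    have hdu := hdeg u
    have hdv := hdeg v
    rw [← SimpleGraph.card_neighborFinset_eq_degree] at hdu hdv
    have hint : 0 < (G.neighborFinset u ∩ G.neighborFinset v).card := by
      have := Finset.card_union_add_card_inter (G.neighborFinset u) (G.neighborFinset v)
      omega
    obtain ⟨w, hw⟩ := Finset.card_pos.mp hint
    rw [Finset.mem_inter, SimpleGraph.mem_neighborFinset, SimpleGraph.mem_neighborFinset] at hw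
    exact ⟨w, hw.1, hw.2⟩
  -- maximal path
  set S : Set ℕ := {k | ∃ l : List V, (l ≠ [] ∧ l.Nodup ∧ l.Chain' G.Adj) ∧ l.length = k}
    with hSdef
  have hbdd : ∀ k ∈ S, k ≤ Fintype.card V := by
    rintro k ⟨l, ⟨_, hnd, _⟩, rfl⟩
    exact hnd.length_le_card
  have hSne : S.Nonempty := by
    obtain ⟨v⟩ := hV
    exact ⟨1, [v], ⟨by simp, by simp, List.isChain_singleton v⟩, rfl⟩
  have hLmem : sSup S ∈ S := Nat.sSup_mem hSne ⟨_, hbdd⟩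
  obtain ⟨l, ⟨hne, hnd, hc⟩, hlen⟩ := hLmem
  have hmax : ∀ l' : List V, l' ≠ [] → l'.Nodup → l'.Chain' G.Adj →
      l'.length ≤ l.length := by
    intro l' h1 h2 h3
    rw [hlen]
    exact le_csSup ⟨_, hbdd⟩ ⟨l', ⟨h1, h2, h3⟩, rfl⟩
  set a := l.head hne with ha
  set b := l.getLast hne with hb
  have hA : ∀ x, G.Adj a x → x ∈ l := by
    intro x hx
    by_contra hxl
    have h1 : (x :: l) ≠ [] := by simp
    have h2 : (x :: l).Nodup := List.nodup_cons.mpr ⟨hxl, hnd⟩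
    have h3 : (x :: l).Chain' G.Adj := by
      rw [List.Chain', List.isChain_cons]
      refine ⟨?_, hc⟩
      intro y hy
      rw [List.head?_eq_head hne] at hy
      simp only [Option.mem_def, Option.some.injEq] at hy
      subst hy
      exact hx.symm
    have := hmax _ h1 h2 h3
    simp at this
  have hB : ∀ x, G.Adj b x → x ∈ l := by
    intro x hx
    by_contra hxl
    have h1 : (l ++ [x]) ≠ [] := by simp
    have h2 : (l ++ [x]).Nodup := by
      rw [List.nodup_append]
      exact ⟨hnd, by simp, fun a ha b hb => by simp at hb; subst hb; exact fun h => hxl (h ▸ ha)⟩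
    have h3 : (l ++ [x]).Chain' G.Adj := by
      rw [List.Chain', List.isChain_append]
      refine ⟨hc, List.isChain_singleton x, ?_⟩
      intro p hp q hq
      rw [List.getLast?_eq_getLast hne] at hp
      simp only [Option.mem_def, Option.some.injEq] at hp hq
      simp only [List.head?_cons, Option.some.injEq] at hq
      subst hp; subst hq
      exact hx
    have := hmax _ h1 h2 h3
    simp at this
  have h2len : 2 ≤ l.length := by
    by_contra hlt
    have hl1 : l.length = 1 := by
      have := List.length_pos_iff.mpr hne
      omega
    obtain ⟨y, rfl⟩ := List.length_eq_one_iff.mp hl1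
    have hdy := hdeg y
    have h0 : 0 < G.degree y := by omega
    rw [← SimpleGraph.card_neighborFinset_eq_degree] at h0
    obtain ⟨x, hx⟩ := Finset.card_pos.mp h0
    rw [SimpleGraph.mem_neighborFinset] at hx
    have hay : a = y := rfl
    have := hA x (by rwa [hay])
    simp only [List.mem_singleton] at this
    subst this
    exact G.irrefl hx
  have hsum : l.length + 1 ≤ G.degree a + G.degree b := by
    have h1 := hdeg a
    have h2 := hdeg b
    have h3 : l.length ≤ Fintype.card V := hnd.length_le_card
    omega
  obtain ⟨i, hi, hAi, hBi⟩ := crossing_lemma hne hnd h2len hA hB hsum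
  obtain ⟨c, hperm, hcyc⟩ := cycList_of_crossing hne hc (fun h => h.symm) hi hAi hBi
  have hcne : c ≠ [] := by
    intro h
    rw [h] at hperm
    rw [hperm.nil_eq] at hne
    exact hne rfl
  -- spanning
  have hspan : ∀ v, v ∈ l := by
    by_contra hv
    push_neg at hv
    obtain ⟨y, hy⟩ := hv
    -- find y' ∉ l adjacent to z ∈ l
    have hstep : ∃ y' z, y' ∉ l ∧ z ∈ l ∧ G.Adj z y' := by
      by_cases hya : G.Adj y a
      · exact ⟨y, a, hy, l.head_mem hne, hya.symm⟩
      · have hynea : y ≠ a := by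
          intro h; subst h; exact hy (l.head_mem hne)
        obtain ⟨w, hw1, hw2⟩ := hcommon y a hynea hya
        by_cases hwl : w ∈ l
        · exact ⟨y, w, hy, hwl, hw1.symm⟩
        · exact ⟨w, a, hwl, l.head_mem hne, hw2⟩
    obtain ⟨y', z, hy', hz, hadj⟩ := hstep
    have hzc : z ∈ c := (hperm.mem_iff).mpr hz
    obtain ⟨n₀, hne', hlast⟩ := exists_rotate_getLast_eq hzc
    have hcyc' : CycList G (c.rotate n₀) := hcyc.rotate n₀
    set c' := c.rotate n₀ with hc'
    have hmemc' : ∀ x, x ∈ c' ↔ x ∈ l := by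
      intro x
      rw [hc', List.mem_rotate, hperm.mem_iff]
    have h1 : (c' ++ [y']) ≠ [] := by simp
    have h2 : (c' ++ [y']).Nodup := by
      rw [List.nodup_append]
      refine ⟨?_, by simp, ?_⟩
      · rw [hc', List.nodup_rotate]
        exact hperm.nodup_iff.mpr hnd
      · intro a ha b hb
        simp at hb; subst hb
        intro h; subst h
        exact hy' ((hmemc' _).mp ha)
    have h3 : (c' ++ [y']).Chain' G.Adj := by
      rw [List.Chain', List.isChain_append]
      refine ⟨hcyc'.1, List.isChain_singleton _, ?_⟩
      intro p hp q hq
      rw [List.getLast?_eq_getLast hne'] at hp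
      simp only [Option.mem_def, Option.some.injEq, List.head?_cons] at hp hq
      subst hp; subst hq
      rw [hlast]
      exact hadj
    have hle := hmax _ h1 h2 h3
    rw [List.length_append, List.length_singleton, hc', List.length_rotate,
      hperm.length_eq] at hle
    omega
  -- conclude
  have hmemc : ∀ v, v ∈ c := fun v => (hperm.mem_iff).mpr (hspan v)
  have hndc : c.Nodup := hperm.nodup_iff.mpr hnd
  have hlenc : 3 ≤ c.length := by
    have h1 : Finset.univ ⊆ c.toFinset := fun v _ => List.mem_toFinset.mpr (hmemc v)
    have h2 := Finset.card_le_card h1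
    rw [Finset.card_univ, List.toFinset_card_of_nodup hndc] at h2
    omega
  apply isHamiltonian_of_cycleList c hcne hndc hmemc hcyc.1 hlenc
  apply hcyc.2
  · rw [List.getLast?_eq_getLast hcne]; rfl
  · rw [List.head?_eq_head hcne]; rfl






noncomputable def partner {M : G.Subgraph} (hM : M.IsMatching) (v : V) (hv : v ∈ M.verts) :
    V := (hM hv).choose

lemma partner_adj {M : G.Subgraph} (hM : M.IsMatching) (v : V) (hv : v ∈ M.verts) :
    M.Adj v (partner hM v hv) := (hM hv).choose_spec.1

lemma partner_eq {M : G.Subgraph} (hM : M.IsMatching) {v w : V} (hv : v ∈ M.verts)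
    (h : M.Adj v w) : partner hM v hv = w := ((hM hv).choose_spec.2 w h).symm

lemma partner_mem {M : G.Subgraph} (hM : M.IsMatching) (v : V) (hv : v ∈ M.verts) :
    partner hM v hv ∈ M.verts := M.edge_vert (partner_adj hM v hv).symm

lemma partner_injOn {M : G.Subgraph} (hM : M.IsMatching) {x y : V} (hx : x ∈ M.verts)
    (hy : y ∈ M.verts) (h : partner hM x hx = partner hM y hy) : x = y := by
  have hax : M.Adj x (partner hM x hx) := partner_adj hM x hx
  have hay : M.Adj y (partner hM x hx) := h ▸ partner_adj hM y hy
  have hp : partner hM x hx ∈ M.verts := partner_mem hM x hx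
  obtain ⟨w, -, huniq⟩ := hM hp
  rw [huniq x hax.symm, huniq y hay.symm]

lemma verts_ncard_eq [Fintype V] {M : G.Subgraph} (hM : M.IsMatching) :
    M.verts.ncard = 2 * M.edgeSet.ncard := by
  classical
  have hW : M.verts.ncard = M.verts.toFinset.card := Set.ncard_eq_toFinset_card' _
  have hF : M.edgeSet.ncard = M.edgeSet.toFinset.card := Set.ncard_eq_toFinset_card' _
  rw [hW, hF]
  set g : V → Sym2 V := fun v => if h : v ∈ M.verts then s(v, partner hM v h) else s(v, v)
    with hg
  have hmap : ∀ v ∈ M.verts.toFinset, g v ∈ M.edgeSet.toFinset := by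
    intro v hv
    rw [Set.mem_toFinset] at hv
    rw [Set.mem_toFinset, hg]
    simp only [hv, dif_pos]
    exact SimpleGraph.Subgraph.mem_edgeSet.mpr (partner_adj hM v hv)
  rw [Finset.card_eq_sum_card_fiberwise hmap]
  rw [Finset.sum_congr rfl (g := fun _ => 2), Finset.sum_const, smul_eq_mul, Nat.mul_comm]
  intro e he
  rw [Set.mem_toFinset] at he
  induction e with
  | h x y =>
    have hadj : M.Adj x y := SimpleGraph.Subgraph.mem_edgeSet.mp he
    have hxy : x ≠ y := G.ne_of_adj (M.adj_sub hadj)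
    have hxv : x ∈ M.verts := M.edge_vert hadj
    have hyv : y ∈ M.verts := M.edge_vert hadj.symm
    have : (M.verts.toFinset.filter (fun v => g v = s(x, y))) = {x, y} := by
      ext v
      rw [Finset.mem_filter, Set.mem_toFinset, Finset.mem_insert, Finset.mem_singleton]
      constructor
      · rintro ⟨hv, hgv⟩
        rw [hg] at hgv
        simp only [hv, dif_pos] at hgv
        rw [Sym2.eq_iff] at hgv
        rcases hgv with ⟨h1, -⟩ | ⟨h1, -⟩
        · exact Or.inl h1
        · exact Or.inr h1
      · rintro (rfl | rfl)
        · refine ⟨hxv, ?_⟩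
          rw [hg]
          simp only [hxv, dif_pos]
          rw [partner_eq hM hxv hadj]
        · refine ⟨hyv, ?_⟩
          rw [hg]
          simp only [hyv, dif_pos]
          rw [partner_eq hM hyv hadj.symm, Sym2.eq_swap]
    rw [this, Finset.card_insert_of_notMem (by simpa using hxy), Finset.card_singleton]




theorem reduction [Fintype V] [DecidableEq V] (G : SimpleGraph V) [DecidableRel G.Adj]
    (hκ : 2 ≤ vertexConnectivity G) (hm : matchingNumber G < vertexConnectivity G) :
    3 ≤ Fintype.card V ∧ ∀ v, Fintype.card V + 1 ≤ 2 * G.degree v := by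
  classical
  have hκdeg : ∀ v : V, vertexConnectivity G ≤ G.degree v := by
    intro v
    by_cases hcase : ∃ y, y ≠ v ∧ y ∉ G.neighborFinset v
    · obtain ⟨y, hyv, hyn⟩ := hcase
      apply Nat.sInf_le
      refine ⟨G.neighborFinset v, G.card_neighborFinset_eq_degree v, Or.inl ?_⟩
      intro hconn
      have hv : v ∈ (↑(G.neighborFinset v) : Set V)ᶜ := by simp
      have hy : y ∈ (↑(G.neighborFinset v) : Set V)ᶜ := by simpa using hyn
      obtain ⟨p⟩ := hconn.preconnected ⟨v, hv⟩ ⟨y, hy⟩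
      have hnnil : ¬ p.Nil := SimpleGraph.Walk.not_nil_of_ne (by
        intro h
        exact hyv (congrArg Subtype.val h).symm)
      have hadj := SimpleGraph.Walk.adj_snd hnnil
      have : G.Adj v (p.getVert 1).val := hadj
      exact (p.getVert 1).2 (by simpa using this)
    · push_neg at hcase
      apply Nat.sInf_le
      refine ⟨G.neighborFinset v, G.card_neighborFinset_eq_degree v, Or.inr ?_⟩
      have hsub : (Finset.univ : Finset V) ⊆ insert v (G.neighborFinset v) := by
        intro y _
        rcases eq_or_ne y v with rfl | hne
        · exact Finset.mem_insert_self _ _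
        · exact Finset.mem_insert_of_mem (hcase y hne)
      have := Finset.card_le_card hsub
      rw [Finset.card_univ] at this
      have := Finset.card_insert_le v (G.neighborFinset v)
      rw [← G.card_neighborFinset_eq_degree]
      omega
  have hn3 : 3 ≤ Fintype.card V := by
    rcases Nat.eq_zero_or_pos (Fintype.card V) with h0 | hpos
    · exfalso
      have : vertexConnectivity G ≤ 0 :=
        Nat.sInf_le ⟨∅, Finset.card_empty, Or.inr (by omega)⟩
      omega
    · obtain ⟨v0⟩ : Nonempty V := Fintype.card_pos_iff.mp hpos
      have : vertexConnectivity G ≤ Fintype.card V - 1 := by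
        apply Nat.sInf_le
        refine ⟨Finset.univ.erase v0, ?_, Or.inr (by omega)⟩
        rw [Finset.card_erase_of_mem (Finset.mem_univ _), Finset.card_univ]
      omega
  -- matching facts
  have hbdd : BddAbove {n | ∃ M : G.Subgraph, M.IsMatching ∧ M.edgeSet.ncard = n} := by
    refine ⟨Fintype.card (Sym2 V), ?_⟩
    rintro k ⟨M, hM, rfl⟩
    have : M.edgeSet.ncard ≤ (Set.univ : Set (Sym2 V)).ncard :=
      Set.ncard_le_ncard (Set.subset_univ _) Set.finite_univ
    rwa [Set.ncard_univ, Nat.card_eq_fintype_card] at this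
  have h0mem : 0 ∈ {n | ∃ M : G.Subgraph, M.IsMatching ∧ M.edgeSet.ncard = n} := by
    refine ⟨⊥, ?_, by simp [SimpleGraph.Subgraph.edgeSet_bot]⟩
    intro v hv
    simp only [SimpleGraph.Subgraph.verts_bot, Set.mem_empty_iff_false] at hv
  have hub : ∀ M : G.Subgraph, M.IsMatching → M.edgeSet.ncard ≤ matchingNumber G := by
    intro M hM
    exact le_csSup hbdd ⟨M, hM, rfl⟩
  obtain ⟨Mx, hMx, hMxcard⟩ : ∃ M : G.Subgraph, M.IsMatching ∧
      M.edgeSet.ncard = matchingNumber G := Nat.sSup_mem ⟨0, h0mem⟩ hbdd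
  set m := matchingNumber G with hmdef
  have hκm : m + 1 ≤ vertexConnectivity G := hm
  have hdegm : ∀ v, m + 1 ≤ G.degree v := fun v => le_trans hκm (hκdeg v)
  have hn2m : Fintype.card V ≤ 2 * m + 1 := by
    by_contra hcon
    push_neg at hcon
    have hvc : Mx.verts.ncard = 2 * m := by rw [verts_ncard_eq hMx, hMxcard]
    have hcompl : 1 < (Mx.vertsᶜ).ncard := by
      have hs : Mx.verts.ncard + Mx.vertsᶜ.ncard = Fintype.card V := by
        rw [← Nat.card_eq_fintype_card]
        exact Set.ncard_add_ncard_compl Mx.verts (Set.toFinite _) (Set.toFinite _)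
      omega
    obtain ⟨u, w, hu, hw, huw⟩ := (Set.one_lt_ncard_iff (Set.toFinite _)).mp hcompl
    rw [Set.mem_compl_iff] at hu hw
    -- no edges with an endpoint outside Mx can exist between two exposed vertices
    have hout : ∀ x y : V, x ∉ Mx.verts → y ∉ Mx.verts → ¬ G.Adj x y := by
      intro x y hx hy hadj
      have hsup : ((G.subgraphOfAdj hadj)).IsMatching :=
        SimpleGraph.Subgraph.IsMatching.subgraphOfAdj hadj
      have hdisj : Disjoint Mx.support (G.subgraphOfAdj hadj).support := by
        rw [hMx.support_eq_verts, SimpleGraph.support_subgraphOfAdj]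
        rw [Set.disjoint_iff]
        rintro z ⟨hz1, hz2⟩
        simp only [Set.mem_insert_iff, Set.mem_singleton_iff] at hz2
        rcases hz2 with rfl | rfl
        · exact hx hz1
        · exact hy hz1
      have hM' : (Mx ⊔ G.subgraphOfAdj hadj).IsMatching := hMx.sup hsup hdisj
      have hcard : (Mx ⊔ G.subgraphOfAdj hadj).edgeSet.ncard = m + 1 := by
        rw [SimpleGraph.Subgraph.edgeSet_sup, SimpleGraph.edgeSet_subgraphOfAdj,
          Set.union_singleton, Set.ncard_insert_of_notMem ?_ (Set.toFinite _), hMxcard]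
        intro hmem
        exact hx (Mx.edge_vert (SimpleGraph.Subgraph.mem_edgeSet.mp hmem))
      have := hub _ hM'
      omega
    have hnbru : ∀ x, G.Adj u x → x ∈ Mx.verts := by
      intro x hx
      by_contra hxv
      exact hout u x hu hxv hx
    have hnbrw : ∀ x, G.Adj w x → x ∈ Mx.verts := by
      intro x hx
      by_contra hxv
      exact hout w x hw hxv hx
    by_cases hcc : ∃ x, ∃ hx : x ∈ Mx.verts, G.Adj u x ∧ G.Adj w (partner hMx x hx)
    · -- augment: a = x, b = partner
      obtain ⟨a, ha, hua, hwb⟩ := hcc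
      set b := partner hMx a ha with hbdef
      have hab : Mx.Adj a b := partner_adj hMx a ha
      have hbv : b ∈ Mx.verts := partner_mem hMx a ha
      have hanb : a ≠ b := G.ne_of_adj (Mx.adj_sub hab)
      have hua' : u ≠ a := fun h => hu (h ▸ ha)
      have hub' : u ≠ b := fun h => hu (h ▸ hbv)
      have hwa : w ≠ a := fun h => hw (h ▸ ha)
      have hwb' : w ≠ b := fun h => hw (h ▸ hbv)
      -- the deleted matching
      set Md := Mx.deleteVerts {a, b} with hMddef
      have hMd : Md.IsMatching := by
        intro v hv
        rw [hMddef, SimpleGraph.Subgraph.deleteVerts_verts] at hv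
        obtain ⟨hv1, hv2⟩ := hv
        simp only [Set.mem_insert_iff, Set.mem_singleton_iff, not_or] at hv2
        set p := partner hMx v hv1 with hpdef
        have hvp : Mx.Adj v p := partner_adj hMx v hv1
        have hpa : p ≠ a := by
          intro h
          have : Mx.Adj a v := (h ▸ hvp).symm
          have := partner_eq hMx ha this
          rw [partner_eq hMx ha hab] at this
          exact hv2.2 this.symm
        have hpb : p ≠ b := by
          intro h
          have : Mx.Adj b v := (h ▸ hvp).symm
          have hba : Mx.Adj b a := hab.symm
          have := partner_eq hMx hbv this
          rw [partner_eq hMx hbv hba] at this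
          exact hv2.1 this.symm
        refine ⟨p, ?_, ?_⟩
        · show (Mx.deleteVerts {a, b}).Adj v p
          rw [SimpleGraph.Subgraph.induce_adj]
          refine ⟨⟨hv1, ?_⟩, ⟨Mx.edge_vert hvp.symm, ?_⟩, hvp⟩
          · simp only [Set.mem_insert_iff, Set.mem_singleton_iff, not_or]
            exact hv2
          · simp only [Set.mem_insert_iff, Set.mem_singleton_iff, not_or]
            exact ⟨hpa, hpb⟩
        · intro y hy
          rw [hMddef, SimpleGraph.Subgraph.induce_adj] at hy
          exact (partner_eq hMx hv1 hy.2.2).symm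
      have hMdverts : Md.verts = Mx.verts \ {a, b} := by
        rw [hMddef, SimpleGraph.Subgraph.deleteVerts_verts]
      -- new matching
      have hM1 : (Md ⊔ G.subgraphOfAdj hua).IsMatching := by
        apply hMd.sup (SimpleGraph.Subgraph.IsMatching.subgraphOfAdj hua)
        rw [hMd.support_eq_verts, SimpleGraph.support_subgraphOfAdj, hMdverts]
        rw [Set.disjoint_iff]
        rintro z ⟨hz1, hz2⟩
        simp only [Set.mem_insert_iff, Set.mem_singleton_iff] at hz2
        rcases hz2 with rfl | rfl
        · exact hu hz1.1
        · exact hz1.2 (by simp)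
      have hM2 : (Md ⊔ G.subgraphOfAdj hua ⊔ G.subgraphOfAdj hwb).IsMatching := by
        apply hM1.sup (SimpleGraph.Subgraph.IsMatching.subgraphOfAdj hwb)
        rw [hM1.support_eq_verts, SimpleGraph.Subgraph.verts_sup, hMdverts,
          SimpleGraph.subgraphOfAdj_verts, SimpleGraph.support_subgraphOfAdj]
        rw [Set.disjoint_iff]
        rintro z ⟨hz1, hz2⟩
        simp only [Set.mem_insert_iff, Set.mem_singleton_iff] at hz2
        rcases hz2 with rfl | rfl
        · rcases hz1 with h | h
          · exact hw h.1
          · simp only [Set.mem_insert_iff, Set.mem_singleton_iff] at h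
            rcases h with h | h
            · exact huw h.symm
            · exact hwa h
        · rcases hz1 with h | h
          · exact h.2 (by simp)
          · simp only [Set.mem_insert_iff, Set.mem_singleton_iff] at h
            rcases h with h | h
            · exact hub' h.symm
            · exact hanb h.symm
      have hverts2 : (Md ⊔ G.subgraphOfAdj hua ⊔ G.subgraphOfAdj hwb).verts
          = insert u (insert w Mx.verts) := by
        rw [SimpleGraph.Subgraph.verts_sup, SimpleGraph.Subgraph.verts_sup, hMdverts,
          SimpleGraph.subgraphOfAdj_verts, SimpleGraph.subgraphOfAdj_verts]
        ext z
        simp only [Set.mem_union, Set.mem_diff, Set.mem_insert_iff, Set.mem_singleton_iff]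
        constructor
        · rintro ((⟨h1, -⟩ | (rfl | rfl)) | (rfl | rfl))
          · exact Or.inr (Or.inr h1)
          · exact Or.inl rfl
          · exact Or.inr (Or.inr ha)
          · exact Or.inr (Or.inl rfl)
          · exact Or.inr (Or.inr hbv)
        · rintro (rfl | rfl | hz)
          · exact Or.inl (Or.inr (Or.inl rfl))
          · exact Or.inr (Or.inl rfl)
          · by_cases hza : z = a
            · exact Or.inl (Or.inr (Or.inr hza))
            · by_cases hzb : z = b
              · exact Or.inr (Or.inr hzb)
              · exact Or.inl (Or.inl ⟨hz, by simp [hza, hzb]⟩)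
      have hvcard : (Md ⊔ G.subgraphOfAdj hua ⊔ G.subgraphOfAdj hwb).verts.ncard
          = 2 * m + 2 := by
        rw [hverts2, Set.ncard_insert_of_notMem ?_ (Set.toFinite _),
          Set.ncard_insert_of_notMem hw (Set.toFinite _), hvc]
        simp only [Set.mem_insert_iff, not_or]
        exact ⟨huw, hu⟩
      have hecard := verts_ncard_eq hM2
      rw [hvcard] at hecard
      have := hub _ hM2
      omega
    · -- no augmenting pair: count degrees
      push_neg at hcc
      set pnr : V → V := fun x => if h : x ∈ Mx.verts then partner hMx x h else x with hpnr
      set T := (G.neighborFinset u).image pnr with hT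
      have hTcard : T.card = G.degree u := by
        rw [hT, Finset.card_image_of_injOn, SimpleGraph.card_neighborFinset_eq_degree]
        intro x hx y hy hxy
        rw [Finset.mem_coe, SimpleGraph.mem_neighborFinset] at hx hy
        have hxv := hnbru x hx
        have hyv := hnbru y hy
        rw [hpnr] at hxy
        simp only [hxv, hyv, dif_pos] at hxy
        exact partner_injOn hMx hxv hyv hxy
      have hTsub : T ⊆ Mx.verts.toFinset := by
        intro z hz
        rw [hT, Finset.mem_image] at hz
        obtain ⟨x, hx, rfl⟩ := hz
        rw [SimpleGraph.mem_neighborFinset] at hx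
        have hxv := hnbru x hx
        rw [hpnr]
        simp only [hxv, dif_pos]
        rw [Set.mem_toFinset]
        exact partner_mem hMx x hxv
      have hWsub : G.neighborFinset w ⊆ Mx.verts.toFinset := by
        intro z hz
        rw [SimpleGraph.mem_neighborFinset] at hz
        rw [Set.mem_toFinset]
        exact hnbrw z hz
      have hdisj : Disjoint T (G.neighborFinset w) := by
        rw [Finset.disjoint_iff_inter_eq_empty]
        ext z
        simp only [Finset.mem_inter, Finset.notMem_empty, iff_false, not_and]
        intro hzT hzW
        rw [hT, Finset.mem_image] at hzT
        obtain ⟨x, hx, rfl⟩ := hzT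
        rw [SimpleGraph.mem_neighborFinset] at hx
        have hxv := hnbru x hx
        rw [SimpleGraph.mem_neighborFinset] at hzW
        rw [hpnr] at hzW
        simp only [hxv, dif_pos] at hzW
        exact hcc x hxv hx hzW
      have hcards : T.card + (G.neighborFinset w).card ≤ Mx.verts.toFinset.card := by
        rw [← Finset.card_union_of_disjoint hdisj]
        apply Finset.card_le_card
        exact Finset.union_subset hTsub hWsub
      rw [hTcard, SimpleGraph.card_neighborFinset_eq_degree,
        ← Set.ncard_eq_toFinset_card', hvc] at hcards
      have h1 := hdegm u
      have h2 := hdegm w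
      omega
  refine ⟨hn3, fun v => ?_⟩
  have := hdegm v
  omega


end StmtAux

end Auxiliary

/-- If `κ(G) ≥ 2` and `m(G) < κ(G)` (strict inequality), then `G` is Hamiltonian. -/
theorem stmt_16 {V : Type*} [Fintype V] [DecidableEq V] (G : SimpleGraph V)
    (hκ : 2 ≤ vertexConnectivity G)
    (hm : matchingNumber G < vertexConnectivity G) :
    G.IsHamiltonian := by
  classical
  obtain ⟨hn3, hdeg⟩ := StmtAux.reduction G hκ hm
  exact StmtAux.hamiltonian_of_strict_ore hn3 hdeg
end
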